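/- arXiv:2007.01607 — 3 statements merged into one kernel-verified Lean document; each statement's English description precedes it below -/
import Mathlib

section
/- Let δ ∈ (0,1) and set α(ε) = −1 + δ(1 + ε²/2) for ε > 0 small. Then c'(α(ε)) → +∞ as ε → 0⁺, with rate (ε log ε)^{−2}: there exist constants C₁, C₂ > 0 and ε₀ ∈ (0,1) such that C₁ ≤ (ε·log ε)²·c'(α(ε)) ≤ C₂ for all ε ∈ (0, ε₀). -/
open MeasureTheory Set Filter Real

/-- `Mn n x₀ E`: sup of `|P(x₀)|` over real polynomials of degree at most `n`
bounded by 1 on `E`. -/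
noncomputable def Mn (n : ℕ) (x₀ : ℝ) (E : Set ℝ) : ℝ :=
  sSup {y | ∃ P : Polynomial ℝ, P.natDegree ≤ n ∧ (∀ x ∈ E, |P.eval x| ≤ 1) ∧
    y = |P.eval x₀|}

/-- `Ln n δ x₀`: sup of `Mn n x₀ E` over closed subsets `E ⊆ [-1,1]` with
Lebesgue measure at least `2 - 2δ`. -/
noncomputable def Ln (n : ℕ) (δ : ℝ) (x₀ : ℝ) : ℝ :=
  sSup {y | ∃ E : Set ℝ, IsClosed E ∧ E ⊆ Icc (-1 : ℝ) 1 ∧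
    2 - 2 * δ ≤ (volume E).toReal ∧ y = Mn n x₀ E}

/-- The two-interval set `E(α,δ) = [-1,1] \ (α-δ, α+δ)`. -/
def Eset (α δ : ℝ) : Set ℝ := Icc (-1 : ℝ) 1 \ Ioo (α - δ) (α + δ)

/-- The critical point `c(α)` of the Green function of `ℂ̄ \ E(α,δ)` in the gap. -/
noncomputable def cpt (δ α : ℝ) : ℝ :=
  (∫ ξ in (α - δ)..(α + δ), ξ / Real.sqrt ((1 - ξ^2) * (ξ - (α - δ)) * ((α + δ) - ξ))) /
  (∫ ξ in (α - δ)..(α + δ), 1 / Real.sqrt ((1 - ξ^2) * (ξ - (α - δ)) * ((α + δ) - ξ)))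

/-- The Green function `G_{α,δ}(x)` of `ℂ̄ \ E(α,δ)` with pole at `∞`,
in the gap `(α-δ, α+δ)`. -/
noncomputable def Gtwo (δ α x : ℝ) : ℝ :=
  ∫ ξ in (α - δ)..x, (cpt δ α - ξ) / Real.sqrt ((1 - ξ^2) * (ξ - (α - δ)) * ((α + δ) - ξ))

/-- The Green function `G_δ(x)` of `ℂ̄ \ [-1+2δ, 1]` with pole at `∞`. -/
noncomputable def Gone (δ x : ℝ) : ℝ :=
  if x ≤ -1 + 2 * δ then
    Real.log ((δ - x) / (1 - δ) + Real.sqrt (((δ - x) / (1 - δ))^2 - 1))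
  else 0

/-- The upper envelope `Φ_δ(x)`; `sSup ∅ = 0` in `ℝ`. -/
noncomputable def Phi (δ x : ℝ) : ℝ :=
  max (Gone δ x)
    (sSup {y | ∃ α ∈ Ioc (δ - 1) (0 : ℝ), x ∈ Ioo (α - δ) (α + δ) ∧ y = Gtwo δ α x})

/-- `Cheb n y = ((y+√(y²−1))ⁿ + (y−√(y²−1))ⁿ)/2`, the Chebyshev polynomial of the
first kind for `y ≥ 1`. -/
noncomputable def Cheb (n : ℕ) (y : ℝ) : ℝ :=
  ((y + Real.sqrt (y^2 - 1))^n + (y - Real.sqrt (y^2 - 1))^n) / 2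


namespace CdotAux

noncomputable def Dint (δ α : ℝ) : ℝ :=
  ∫ θ in (-(π/2))..(π/2), 1 / Real.sqrt (1 - (α + δ * Real.sin θ)^2)
noncomputable def Nint (δ α : ℝ) : ℝ :=
  ∫ θ in (-(π/2))..(π/2), (α + δ * Real.sin θ) / Real.sqrt (1 - (α + δ * Real.sin θ)^2)
noncomputable def D'int (δ α : ℝ) : ℝ :=
  ∫ θ in (-(π/2))..(π/2), (α + δ * Real.sin θ) /
    ((1 - (α + δ * Real.sin θ)^2) * Real.sqrt (1 - (α + δ * Real.sin θ)^2))
noncomputable def N'int (δ α : ℝ) : ℝ :=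
  ∫ θ in (-(π/2))..(π/2), 1 /
    ((1 - (α + δ * Real.sin θ)^2) * Real.sqrt (1 - (α + δ * Real.sin θ)^2))

lemma image_sin_map (δ α : ℝ) (hδ : 0 < δ) :
    (fun θ : ℝ => α + δ * Real.sin θ) '' Ioo (-(π/2)) (π/2) = Ioo (α - δ) (α + δ) := by
  ext x
  constructor
  · rintro ⟨θ, hθ, rfl⟩
    obtain ⟨h1, h2⟩ := hθ
    have hs1 : Real.sin (-(π/2)) < Real.sin θ :=
      Real.strictMonoOn_sin ⟨le_refl _, by linarith [Real.pi_pos]⟩ ⟨le_of_lt h1, le_of_lt h2⟩ h1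
    have hs2 : Real.sin θ < Real.sin (π/2) :=
      Real.strictMonoOn_sin ⟨le_of_lt h1, le_of_lt h2⟩ ⟨by linarith [Real.pi_pos], le_refl _⟩ h2
    simp only [Real.sin_neg, Real.sin_pi_div_two] at hs1 hs2
    constructor <;> simp only [] <;> nlinarith
  · intro hx
    refine ⟨Real.arcsin ((x - α) / δ), ⟨?_, ?_⟩, ?_⟩
    · rw [Real.neg_pi_div_two_lt_arcsin]
      rw [lt_div_iff₀ hδ]
      obtain ⟨h1, _⟩ := hx; linarith
    · rw [Real.arcsin_lt_pi_div_two, div_lt_iff₀ hδ]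
      obtain ⟨_, h2⟩ := hx; linarith
    · show α + δ * Real.sin (Real.arcsin ((x - α) / δ)) = x
      rw [Real.sin_arcsin]
      · field_simp
        ring
      · rw [le_div_iff₀ hδ]; obtain ⟨h1, _⟩ := hx; linarith
      · rw [div_le_iff₀ hδ]; obtain ⟨_, h2⟩ := hx; linarith

lemma cov (δ α : ℝ) (hδ : δ ∈ Ioo (0:ℝ) 1) (hα : α ∈ Ioo (δ - 1) (1 - δ)) (g : ℝ → ℝ) :
    (∫ ξ in (α - δ)..(α + δ),
        g ξ / Real.sqrt ((1 - ξ^2) * (ξ - (α - δ)) * ((α + δ) - ξ))) =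
    ∫ θ in (-(π/2))..(π/2), g (α + δ * Real.sin θ) / Real.sqrt (1 - (α + δ * Real.sin θ)^2) := by
  obtain ⟨hδ0, hδ1⟩ := hδ
  obtain ⟨hα1, hα2⟩ := hα
  have hab : α - δ < α + δ := by linarith
  have hpi2 : -(π/2) < π/2 := by linarith [Real.pi_pos]
  set f : ℝ → ℝ := fun θ => α + δ * Real.sin θ with hf
  have hf' : ∀ θ ∈ Ioo (-(π/2)) (π/2),
      HasDerivWithinAt f (δ * Real.cos θ) (Ioo (-(π/2)) (π/2)) θ := by
    intro θ _
    exact (((Real.hasDerivAt_sin θ).const_mul δ).const_add α).hasDerivWithinAt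
  have hmono : StrictMonoOn f (Ioo (-(π/2)) (π/2)) := by
    intro x hx y hy hxy
    have := Real.strictMonoOn_sin (Ioo_subset_Icc_self hx) (Ioo_subset_Icc_self hy) hxy
    simp only [hf]
    nlinarith
  have himg := image_sin_map δ α hδ0
  have key := integral_image_eq_integral_abs_deriv_smul measurableSet_Ioo hf'
    hmono.injOn (fun ξ => g ξ / Real.sqrt ((1 - ξ^2) * (ξ - (α - δ)) * ((α + δ) - ξ)))
  rw [himg] at key
  rw [intervalIntegral.integral_of_le hab.le, MeasureTheory.integral_Ioc_eq_integral_Ioo, key,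
    intervalIntegral.integral_of_le hpi2.le, MeasureTheory.integral_Ioc_eq_integral_Ioo]
  apply MeasureTheory.setIntegral_congr_fun measurableSet_Ioo
  intro θ hθ
  obtain ⟨h1, h2⟩ := hθ
  have hcos : 0 < Real.cos θ := Real.cos_pos_of_mem_Ioo ⟨h1, h2⟩
  have hs1 : Real.sin (-(π/2)) < Real.sin θ :=
    Real.strictMonoOn_sin ⟨le_refl _, by linarith [Real.pi_pos]⟩ ⟨le_of_lt h1, le_of_lt h2⟩ h1
  have hs2 : Real.sin θ < Real.sin (π/2) :=
    Real.strictMonoOn_sin ⟨le_of_lt h1, le_of_lt h2⟩ ⟨by linarith [Real.pi_pos], le_refl _⟩ h2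
  simp only [Real.sin_neg, Real.sin_pi_div_two] at hs1 hs2
  have hu1 : -1 < f θ := by simp only [hf]; nlinarith
  have hu2 : f θ < 1 := by simp only [hf]; nlinarith
  have hv : 0 < 1 - (f θ)^2 := by nlinarith
  have e1 : f θ - (α - δ) = δ * (1 + Real.sin θ) := by simp only [hf]; ring
  have e2 : (α + δ) - f θ = δ * (1 - Real.sin θ) := by simp only [hf]; ring
  have h1s : (0:ℝ) ≤ δ * (1 + Real.sin θ) := by nlinarith
  have h2s : (0:ℝ) ≤ δ * (1 - Real.sin θ) := by nlinarith
  have hsqrt : Real.sqrt ((1 - (f θ)^2) * (f θ - (α - δ)) * ((α + δ) - f θ))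
      = Real.sqrt (1 - (f θ)^2) * (δ * Real.cos θ) := by
    rw [e1, e2, Real.sqrt_mul (by nlinarith), Real.sqrt_mul hv.le]
    have : Real.sqrt (δ * (1 + Real.sin θ)) * Real.sqrt (δ * (1 - Real.sin θ))
        = Real.sqrt ((δ * Real.cos θ)^2) := by
      rw [← Real.sqrt_mul h1s]
      congr 1
      have := Real.sin_sq_add_cos_sq θ
      ring_nf
      nlinarith [Real.sin_sq_add_cos_sq θ]
    rw [mul_assoc, this, Real.sqrt_sq (by positivity)]
  show |δ * Real.cos θ| • (g (f θ) / Real.sqrt ((1 - (f θ)^2) * (f θ - (α - δ)) * ((α + δ) - f θ)))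
      = g (f θ) / Real.sqrt (1 - (f θ)^2)
  rw [hsqrt, abs_of_pos (by positivity), smul_eq_mul]
  have hsv : Real.sqrt (1 - (f θ)^2) ≠ 0 := by positivity
  field_simp

lemma cpt_eq (δ α : ℝ) (hδ : δ ∈ Ioo (0:ℝ) 1) (hα : α ∈ Ioo (δ - 1) (1 - δ)) :
    cpt δ α = Nint δ α / Dint δ α := by
  unfold cpt Nint Dint
  rw [cov δ α hδ hα (fun ξ => ξ), cov δ α hδ hα (fun _ => 1)]

end CdotAux
namespace CdotAux

lemma Dint_pos (δ : ℝ) (hδ : δ ∈ Ioo (0:ℝ) 1) {α : ℝ} (hα : α ∈ Ioo (δ - 1) (1 - δ)) :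
    0 < Dint δ α := by
  obtain ⟨hδ0, hδ1⟩ := hδ; obtain ⟨hα1, hα2⟩ := hα
  have hv : ∀ θ : ℝ, 0 < 1 - (α + δ * Real.sin θ)^2 := by
    intro θ
    have hs1 := Real.neg_one_le_sin θ
    have hs2 := Real.sin_le_one θ
    have h1 : 0 < 1 - (α + δ * Real.sin θ) := by nlinarith
    have h2 : 0 < 1 + (α + δ * Real.sin θ) := by nlinarith
    nlinarith
  have hcont : Continuous fun θ : ℝ => 1 / Real.sqrt (1 - (α + δ * Real.sin θ)^2) := by
    apply continuous_const.div
    · exact (continuous_const.sub ((continuous_const.add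
        (continuous_const.mul Real.continuous_sin)).pow 2)).sqrt
    · intro θ; exact ne_of_gt (Real.sqrt_pos.2 (hv θ))
  apply intervalIntegral.intervalIntegral_pos_of_pos_on
    (hcont.intervalIntegrable _ _)
  · intro θ _
    exact div_pos one_pos (Real.sqrt_pos.2 (hv θ))
  · linarith [Real.pi_pos]

lemma hasDerivAt_Dint_Nint (δ : ℝ) (hδ : δ ∈ Ioo (0:ℝ) 1) {α₀ : ℝ}
    (hα : α₀ ∈ Ioo (δ - 1) (1 - δ)) :
    HasDerivAt (Dint δ) (D'int δ α₀) α₀ ∧ HasDerivAt (Nint δ) (N'int δ α₀) α₀ := by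
  obtain ⟨hδ0, hδ1⟩ := hδ; obtain ⟨hα1, hα2⟩ := hα
  set ρ : ℝ := min (α₀ - (δ - 1)) ((1 - δ) - α₀) / 2 with hρdef
  have hρ0 : 0 < ρ := by
    apply div_pos _ two_pos
    apply lt_min <;> linarith
  have hmin1 : min (α₀ - (δ - 1)) ((1 - δ) - α₀) ≤ α₀ - (δ - 1) := min_le_left _ _
  have hmin2 : min (α₀ - (δ - 1)) ((1 - δ) - α₀) ≤ (1 - δ) - α₀ := min_le_right _ _
  have hρa : 2 * ρ ≤ α₀ - (δ - 1) := by rw [hρdef]; linarith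
  have hρb : 2 * ρ ≤ (1 - δ) - α₀ := by rw [hρdef]; linarith
  -- uniform lower bound on v over the ball
  have hm : ∀ x ∈ Metric.ball α₀ ρ, ∀ θ : ℝ, ρ^2 ≤ 1 - (x + δ * Real.sin θ)^2 := by
    intro x hx θ
    rw [Metric.mem_ball, Real.dist_eq, abs_sub_lt_iff] at hx
    have h1 : ρ ≤ 1 + (x + δ * Real.sin θ) := by
      nlinarith [Real.neg_one_le_sin θ]
    have h2 : ρ ≤ 1 - (x + δ * Real.sin θ) := by
      nlinarith [Real.sin_le_one θ]
    nlinarith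
  have hmesv : ∀ x : ℝ, Measurable (fun θ : ℝ => 1 - (x + δ * Real.sin θ)^2) := by
    intro x
    exact measurable_const.sub
      ((measurable_const.add (Real.continuous_sin.measurable.const_mul δ)).pow_const 2)
  have hmesu : ∀ x : ℝ, Measurable (fun θ : ℝ => x + δ * Real.sin θ) := by
    intro x
    exact measurable_const.add (Real.continuous_sin.measurable.const_mul δ)
  have hmeasD : ∀ x : ℝ, AEStronglyMeasurable
      (fun θ : ℝ => 1 / Real.sqrt (1 - (x + δ * Real.sin θ)^2))
      (volume.restrict (Set.uIoc (-(π/2)) (π/2))) := by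
    intro x
    exact (measurable_const.div (Real.continuous_sqrt.measurable.comp (hmesv x))).aestronglyMeasurable
  have hmeasN : ∀ x : ℝ, AEStronglyMeasurable
      (fun θ : ℝ => (x + δ * Real.sin θ) / Real.sqrt (1 - (x + δ * Real.sin θ)^2))
      (volume.restrict (Set.uIoc (-(π/2)) (π/2))) := by
    intro x
    exact ((hmesu x).div (Real.continuous_sqrt.measurable.comp (hmesv x))).aestronglyMeasurable
  have hmeasD' : AEStronglyMeasurable
      (fun θ : ℝ => (α₀ + δ * Real.sin θ) /
        ((1 - (α₀ + δ * Real.sin θ)^2) * Real.sqrt (1 - (α₀ + δ * Real.sin θ)^2)))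
      (volume.restrict (Set.uIoc (-(π/2)) (π/2))) :=
    ((hmesu α₀).div ((hmesv α₀).mul (Real.continuous_sqrt.measurable.comp (hmesv α₀)))).aestronglyMeasurable
  have hmeasN' : AEStronglyMeasurable
      (fun θ : ℝ => 1 /
        ((1 - (α₀ + δ * Real.sin θ)^2) * Real.sqrt (1 - (α₀ + δ * Real.sin θ)^2)))
      (volume.restrict (Set.uIoc (-(π/2)) (π/2))) :=
    (measurable_const.div ((hmesv α₀).mul (Real.continuous_sqrt.measurable.comp (hmesv α₀)))).aestronglyMeasurable
  have hαball : α₀ ∈ Metric.ball α₀ ρ := Metric.mem_ball_self hρ0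
  -- continuity in θ for fixed x in the ball
  have hcont : ∀ x ∈ Metric.ball α₀ ρ, ∀ g : ℝ → ℝ, Continuous g →
      Continuous (fun θ : ℝ => g θ / Real.sqrt (1 - (x + δ * Real.sin θ)^2)) := by
    intro x hx g hg
    apply hg.div
    · exact (continuous_const.sub ((continuous_const.add
        (continuous_const.mul Real.continuous_sin)).pow 2)).sqrt
    · intro θ
      have := hm x hx θ
      exact ne_of_gt (Real.sqrt_pos.2 (by nlinarith))
  -- pointwise derivative facts
  have hderivW : ∀ x ∈ Metric.ball α₀ ρ, ∀ θ : ℝ,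
      HasDerivAt (fun y : ℝ => 1 / Real.sqrt (1 - (y + δ * Real.sin θ)^2))
        ((x + δ * Real.sin θ) /
          ((1 - (x + δ * Real.sin θ)^2) * Real.sqrt (1 - (x + δ * Real.sin θ)^2))) x := by
    intro x hx θ
    set c : ℝ := δ * Real.sin θ
    have hv : 0 < 1 - (x + c)^2 := lt_of_lt_of_le (by positivity) (hm x hx θ)
    have hsv : 0 < Real.sqrt (1 - (x + c)^2) := Real.sqrt_pos.2 hv
    have h1 : HasDerivAt (fun y : ℝ => 1 - (y + c)^2) (-(2 * (x + c))) x := by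
      have h0 := (((hasDerivAt_id x).add_const c).pow 2).const_sub 1
      exact h0.congr_deriv (by simp)
    have h2 := (Real.hasDerivAt_sqrt (ne_of_gt hv)).comp x h1
    simp only [Function.comp_def] at h2
    have h3 := h2.inv (ne_of_gt hsv)
    have h4 : -(1 / (2 * Real.sqrt (1 - (x + c)^2)) * -(2 * (x + c))) /
        (Real.sqrt (1 - (x + c)^2))^2
        = (x + c) / ((1 - (x + c)^2) * Real.sqrt (1 - (x + c)^2)) := by
      rw [Real.sq_sqrt hv.le]
      field_simp
    rw [h4] at h3
    simp only [one_div]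
    exact h3
  have hderivU : ∀ x ∈ Metric.ball α₀ ρ, ∀ θ : ℝ,
      HasDerivAt (fun y : ℝ => (y + δ * Real.sin θ) / Real.sqrt (1 - (y + δ * Real.sin θ)^2))
        (1 / ((1 - (x + δ * Real.sin θ)^2) * Real.sqrt (1 - (x + δ * Real.sin θ)^2))) x := by
    intro x hx θ
    set c : ℝ := δ * Real.sin θ
    have hv : 0 < 1 - (x + c)^2 := lt_of_lt_of_le (by positivity) (hm x hx θ)
    have hsv : 0 < Real.sqrt (1 - (x + c)^2) := Real.sqrt_pos.2 hv
    have hu : HasDerivAt (fun y : ℝ => y + c) 1 x := (hasDerivAt_id x).add_const c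
    have hw := hderivW x hx θ
    have hprod := hu.mul hw
    have heq : 1 * (1 / Real.sqrt (1 - (x + c)^2)) + (x + c) *
        ((x + c) / ((1 - (x + c)^2) * Real.sqrt (1 - (x + c)^2)))
        = 1 / ((1 - (x + c)^2) * Real.sqrt (1 - (x + c)^2)) := by
      have hs2 : Real.sqrt (1 - (x + c)^2) ^ 2 = 1 - (x + c)^2 := Real.sq_sqrt hv.le
      field_simp
      nlinarith [hs2]
    rw [heq] at hprod
    simp only [div_eq_mul_inv, one_div, one_mul] at hprod ⊢
    exact hprod
  have habs : ∀ x ∈ Metric.ball α₀ ρ, ∀ θ : ℝ,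
      (1 - (x + δ * Real.sin θ)^2) * Real.sqrt (1 - (x + δ * Real.sin θ)^2) ≥ ρ^2 * ρ := by
    intro x hx θ
    have h1 := hm x hx θ
    have h2 : Real.sqrt (1 - (x + δ * Real.sin θ)^2) ≥ ρ := by
      rw [show ρ = Real.sqrt (ρ^2) by rw [Real.sqrt_sq hρ0.le]]
      exact Real.sqrt_le_sqrt h1
    nlinarith [Real.sqrt_nonneg (1 - (x + δ * Real.sin θ)^2)]
  constructor
  · have := intervalIntegral.hasDerivAt_integral_of_dominated_loc_of_deriv_le
      (F := fun x θ => 1 / Real.sqrt (1 - (x + δ * Real.sin θ)^2))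
      (F' := fun x θ => (x + δ * Real.sin θ) /
        ((1 - (x + δ * Real.sin θ)^2) * Real.sqrt (1 - (x + δ * Real.sin θ)^2)))
      (bound := fun _ => (ρ^2 * ρ)⁻¹) (s := Metric.ball α₀ ρ) (Metric.ball_mem_nhds α₀ hρ0)
      (Filter.Eventually.of_forall hmeasD)
      (((hcont α₀ hαball (fun _ => 1) continuous_const)).intervalIntegrable _ _)
      hmeasD'
      (Filter.Eventually.of_forall ?_)
      (intervalIntegrable_const)
      (Filter.Eventually.of_forall ?_)
    · exact this.2
    · intro θ _ x hx
      have h1 := hm x hx θ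
      have h2 := habs x hx θ
      have hu2 : (x + δ * Real.sin θ)^2 ≤ 1 := by nlinarith
      have hu : |x + δ * Real.sin θ| ≤ 1 := abs_le_one_iff_mul_self_le_one.2 (by nlinarith)
      rw [Real.norm_eq_abs, abs_div, abs_of_pos (lt_of_lt_of_le (by positivity) h2)]
      rw [div_le_iff₀ (lt_of_lt_of_le (by positivity) h2)]
      calc |x + δ * Real.sin θ| ≤ 1 := hu
        _ ≤ (ρ^2 * ρ)⁻¹ * (ρ^2 * ρ) := by rw [inv_mul_cancel₀ (by positivity)]
        _ ≤ (ρ^2 * ρ)⁻¹ * ((1 - (x + δ * Real.sin θ)^2) * Real.sqrt (1 - (x + δ * Real.sin θ)^2)) := by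
            apply mul_le_mul_of_nonneg_left h2 (by positivity)
    · intro θ _ x hx
      exact hderivW x hx θ
  · have := intervalIntegral.hasDerivAt_integral_of_dominated_loc_of_deriv_le
      (F := fun x θ => (x + δ * Real.sin θ) / Real.sqrt (1 - (x + δ * Real.sin θ)^2))
      (F' := fun x θ => 1 /
        ((1 - (x + δ * Real.sin θ)^2) * Real.sqrt (1 - (x + δ * Real.sin θ)^2)))
      (bound := fun _ => (ρ^2 * ρ)⁻¹) (s := Metric.ball α₀ ρ) (Metric.ball_mem_nhds α₀ hρ0)
      (Filter.Eventually.of_forall hmeasN)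
      (((hcont α₀ hαball (fun θ => α₀ + δ * Real.sin θ)
        (continuous_const.add (continuous_const.mul Real.continuous_sin))).intervalIntegrable _ _))
      hmeasN'
      (Filter.Eventually.of_forall ?_)
      (intervalIntegrable_const)
      (Filter.Eventually.of_forall ?_)
    · exact this.2
    · intro θ _ x hx
      have h2 := habs x hx θ
      rw [Real.norm_eq_abs, abs_div, abs_of_pos (lt_of_lt_of_le (by positivity) h2), abs_one]
      rw [div_le_iff₀ (lt_of_lt_of_le (by positivity) h2)]
      calc (1:ℝ) = (ρ^2 * ρ)⁻¹ * (ρ^2 * ρ) := by rw [inv_mul_cancel₀ (by positivity)]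
        _ ≤ (ρ^2 * ρ)⁻¹ * ((1 - (x + δ * Real.sin θ)^2) * Real.sqrt (1 - (x + δ * Real.sin θ)^2)) := by
            apply mul_le_mul_of_nonneg_left h2 (by positivity)
    · intro θ _ x hx
      exact hderivU x hx θ

lemma deriv_cpt_eq (δ : ℝ) (hδ : δ ∈ Ioo (0:ℝ) 1) {α₀ : ℝ}
    (hα : α₀ ∈ Ioo (δ - 1) (1 - δ)) :
    deriv (cpt δ) α₀ =
      (N'int δ α₀ * Dint δ α₀ - Nint δ α₀ * D'int δ α₀) / (Dint δ α₀)^2 := by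
  obtain ⟨hD, hN⟩ := hasDerivAt_Dint_Nint δ hδ hα
  have hD0 : Dint δ α₀ ≠ 0 := ne_of_gt (Dint_pos δ hδ hα)
  have hq := hN.div hD hD0
  have hev : cpt δ =ᶠ[nhds α₀] fun x => Nint δ x / Dint δ x := by
    filter_upwards [isOpen_Ioo.mem_nhds hα] with x hx
    exact cpt_eq δ x hδ hx
  rw [hev.deriv_eq]; exact hq.deriv

end CdotAux
namespace CdotAux

noncomputable def qq (ε x : ℝ) : ℝ := ε^2/2 + (1 - Real.cos x)

section Jest

variable {ε : ℝ}

lemma qq_pos (hε0 : 0 < ε) (x : ℝ) : 0 < qq ε x := by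
  unfold qq; have := Real.cos_le_one x; nlinarith

lemma qq_cont : Continuous (qq ε) :=
  continuous_const.add (continuous_const.sub Real.continuous_cos)

lemma qq_le (x : ℝ) : qq ε x ≤ (ε^2 + x^2)/2 := by
  unfold qq
  have := Real.one_sub_sq_div_two_le_cos (x := x)
  linarith

lemma qq_ge {x : ℝ} (hx : |x| ≤ π) : x^2/8 ≤ qq ε x := by
  unfold qq
  have h := Real.cos_le_one_sub_mul_cos_sq hx
  have hπ : π ≤ 4 := by linarith [Real.pi_le_four]
  have hπ0 := Real.pi_pos
  have h2 : 1/8 ≤ 2/π^2 := by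
    rw [div_le_div_iff₀ (by norm_num) (by positivity)]
    nlinarith
  nlinarith [sq_nonneg x]

lemma qq_ge_eps (x : ℝ) : ε^2/2 ≤ qq ε x := by
  unfold qq; have := Real.cos_le_one x; nlinarith

lemma sqrt_qq_ge_eps (hε0 : 0 < ε) (x : ℝ) : ε/2 ≤ Real.sqrt (qq ε x) := by
  have h : (ε/2)^2 ≤ qq ε x := by have := qq_ge_eps (ε := ε) x; nlinarith
  calc ε/2 = Real.sqrt ((ε/2)^2) := (Real.sqrt_sq (by positivity)).symm
    _ ≤ _ := Real.sqrt_le_sqrt h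

lemma sqrt_qq_ge_x {x : ℝ} (hx0 : 0 ≤ x) (hx : |x| ≤ π) : x/4 ≤ Real.sqrt (qq ε x) := by
  have h : (x/4)^2 ≤ qq ε x := by have := qq_ge (ε := ε) hx; nlinarith
  calc x/4 = Real.sqrt ((x/4)^2) := (Real.sqrt_sq (by positivity)).symm
    _ ≤ _ := Real.sqrt_le_sqrt h

lemma cont1 (hε0 : 0 < ε) : Continuous fun x => 1 / Real.sqrt (qq ε x) := by
  apply continuous_const.div (qq_cont.sqrt)
  intro x; exact ne_of_gt (Real.sqrt_pos.2 (qq_pos hε0 x))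

lemma cont3 (hε0 : 0 < ε) : Continuous fun x => 1 / (qq ε x * Real.sqrt (qq ε x)) := by
  apply continuous_const.div (qq_cont.mul qq_cont.sqrt)
  intro x
  exact ne_of_gt (mul_pos (qq_pos hε0 x) (Real.sqrt_pos.2 (qq_pos hε0 x)))

lemma log_bound (hε0 : 0 < ε) (hε1 : ε ≤ 1/2) : 1/2 ≤ -Real.log ε := by
  have h1 : Real.log 2 ≤ Real.log ε⁻¹ := by
    apply Real.log_le_log (by norm_num)
    rw [le_inv_comm₀ (by norm_num) hε0]
    linarith
  rw [Real.log_inv] at h1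
  have := Real.log_two_gt_d9
  linarith

lemma J1_lower (hε0 : 0 < ε) (hε1 : ε ≤ 1/2) :
    -Real.log ε ≤ ∫ x in (0:ℝ)..π, 1 / Real.sqrt (qq ε x) := by
  have hπ := Real.pi_gt_three
  have hint : ∀ a b : ℝ, IntervalIntegrable (fun x => 1 / Real.sqrt (qq ε x)) volume a b :=
    fun a b => (cont1 hε0).intervalIntegrable a b
  have hsplit : (∫ x in (0:ℝ)..π, 1 / Real.sqrt (qq ε x)) =
      (∫ x in (0:ℝ)..ε, 1 / Real.sqrt (qq ε x)) + ((∫ x in ε..(1:ℝ), 1 / Real.sqrt (qq ε x))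
      + ∫ x in (1:ℝ)..π, 1 / Real.sqrt (qq ε x)) := by
    rw [intervalIntegral.integral_add_adjacent_intervals (hint ε 1) (hint 1 π),
      intervalIntegral.integral_add_adjacent_intervals (hint 0 ε) (hint ε π)]
  have h1 : (0:ℝ) ≤ ∫ x in (0:ℝ)..ε, 1 / Real.sqrt (qq ε x) := by
    apply intervalIntegral.integral_nonneg hε0.le
    intro x _; positivity
  have h3 : (0:ℝ) ≤ ∫ x in (1:ℝ)..π, 1 / Real.sqrt (qq ε x) := by
    apply intervalIntegral.integral_nonneg (by linarith)
    intro x _; positivity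
  have hix : IntervalIntegrable (fun x : ℝ => 1/x) volume ε 1 := by
    apply ContinuousOn.intervalIntegrable
    apply continuousOn_const.div continuousOn_id
    intro x hx
    rw [Set.uIcc_of_le (by linarith)] at hx
    exact ne_of_gt (lt_of_lt_of_le hε0 hx.1)
  have heq : (∫ x in ε..(1:ℝ), 1/x) = -Real.log ε := by
    rw [integral_one_div (by
      rw [Set.uIcc_of_le (by linarith)]
      intro h
      exact absurd h.1 (by linarith))]
    rw [one_div, Real.log_inv]
  have hmono : (∫ x in ε..(1:ℝ), 1/x) ≤ ∫ x in ε..(1:ℝ), 1 / Real.sqrt (qq ε x) := by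
    apply intervalIntegral.integral_mono_on (by linarith) hix (hint ε 1)
    intro x hx
    obtain ⟨hx1, hx2⟩ := hx
    have hxpos : 0 < x := lt_of_lt_of_le hε0 hx1
    apply one_div_le_one_div_of_le (Real.sqrt_pos.2 (qq_pos hε0 x))
    have hq : qq ε x ≤ x^2 := by have := qq_le (ε := ε) x; nlinarith
    calc Real.sqrt (qq ε x) ≤ Real.sqrt (x^2) := Real.sqrt_le_sqrt hq
      _ = x := Real.sqrt_sq hxpos.le
  linarith

lemma J1_upper (hε0 : 0 < ε) (hε1 : ε ≤ 1/2) :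
    (∫ x in (0:ℝ)..π, 1 / Real.sqrt (qq ε x)) ≤ 26 * (-Real.log ε) := by
  have hπ := Real.pi_gt_three
  have hπ4 := Real.pi_le_four
  have hπ315 := Real.pi_lt_d2
  have hL := log_bound hε0 hε1
  have hint : ∀ a b : ℝ, IntervalIntegrable (fun x => 1 / Real.sqrt (qq ε x)) volume a b :=
    fun a b => (cont1 hε0).intervalIntegrable a b
  have hsplit : (∫ x in (0:ℝ)..π, 1 / Real.sqrt (qq ε x)) =
      (∫ x in (0:ℝ)..ε, 1 / Real.sqrt (qq ε x)) + ∫ x in ε..π, 1 / Real.sqrt (qq ε x) := by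
    rw [intervalIntegral.integral_add_adjacent_intervals (hint 0 ε) (hint ε π)]
  have h1 : (∫ x in (0:ℝ)..ε, 1 / Real.sqrt (qq ε x)) ≤ 2 := by
    have hc : (∫ x in (0:ℝ)..ε, (2/ε)) = 2 := by
      rw [intervalIntegral.integral_const, smul_eq_mul]
      field_simp
      ring
    rw [← hc]
    apply intervalIntegral.integral_mono_on hε0.le (hint 0 ε) intervalIntegrable_const
    intro x _
    calc 1 / Real.sqrt (qq ε x) ≤ 1 / (ε/2) :=
          one_div_le_one_div_of_le (by positivity) (sqrt_qq_ge_eps hε0 x)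
      _ = 2/ε := by field_simp
  have hix : IntervalIntegrable (fun x : ℝ => 4 * (1/x)) volume ε π := by
    apply ContinuousOn.intervalIntegrable
    apply continuousOn_const.mul (continuousOn_const.div continuousOn_id _)
    intro x hx
    rw [Set.uIcc_of_le (by linarith)] at hx
    exact ne_of_gt (lt_of_lt_of_le hε0 hx.1)
  have h2 : (∫ x in ε..π, 1 / Real.sqrt (qq ε x)) ≤ 4 * ((π - 1) + (-Real.log ε)) := by
    have hcalc : (∫ x in ε..π, 4 * (1/x)) = 4 * (Real.log π - Real.log ε) := by
      rw [intervalIntegral.integral_const_mul, integral_one_div (by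
        rw [Set.uIcc_of_le (by linarith)]
        intro h
        exact absurd h.1 (by linarith))]
      rw [Real.log_div (by positivity) (by positivity)]
    have hlogpi : Real.log π ≤ π - 1 := by
      have := Real.log_le_sub_one_of_pos Real.pi_pos
      linarith
    have hmono : (∫ x in ε..π, 1 / Real.sqrt (qq ε x)) ≤ ∫ x in ε..π, 4 * (1/x) := by
      apply intervalIntegral.integral_mono_on (by linarith) (hint ε π) hix
      intro x hx
      obtain ⟨hx1, hx2⟩ := hx
      have hxpos : 0 < x := lt_of_lt_of_le hε0 hx1
      have habs : |x| ≤ π := by rw [abs_of_pos hxpos]; exact hx2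
      calc 1 / Real.sqrt (qq ε x) ≤ 1 / (x/4) :=
            one_div_le_one_div_of_le (by positivity) (sqrt_qq_ge_x hxpos.le habs)
        _ = 4 * (1/x) := by field_simp
    rw [hcalc] at hmono
    linarith
  nlinarith

lemma J3_lower (hε0 : 0 < ε) (hε1 : ε ≤ 1/2) :
    1/ε^2 ≤ ∫ x in (0:ℝ)..π, 1 / (qq ε x * Real.sqrt (qq ε x)) := by
  have hπ := Real.pi_gt_three
  have hint : ∀ a b : ℝ, IntervalIntegrable
      (fun x => 1 / (qq ε x * Real.sqrt (qq ε x))) volume a b :=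
    fun a b => (cont3 hε0).intervalIntegrable a b
  have hsplit : (∫ x in (0:ℝ)..π, 1 / (qq ε x * Real.sqrt (qq ε x))) =
      (∫ x in (0:ℝ)..ε, 1 / (qq ε x * Real.sqrt (qq ε x)))
      + ∫ x in ε..π, 1 / (qq ε x * Real.sqrt (qq ε x)) := by
    rw [intervalIntegral.integral_add_adjacent_intervals (hint 0 ε) (hint ε π)]
  have h2 : (0:ℝ) ≤ ∫ x in ε..π, 1 / (qq ε x * Real.sqrt (qq ε x)) := by
    apply intervalIntegral.integral_nonneg (by linarith)
    intro x _
    have := qq_pos hε0 x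
    positivity
  have h1 : 1/ε^2 ≤ ∫ x in (0:ℝ)..ε, 1 / (qq ε x * Real.sqrt (qq ε x)) := by
    have hc : (∫ x in (0:ℝ)..ε, (1/ε^3)) = 1/ε^2 := by
      rw [intervalIntegral.integral_const, smul_eq_mul]
      field_simp
      ring
    rw [← hc]
    apply intervalIntegral.integral_mono_on hε0.le intervalIntegrable_const (hint 0 ε)
    intro x hx
    obtain ⟨hx1, hx2⟩ := hx
    have hq : qq ε x ≤ ε^2 := by have := qq_le (ε := ε) x; nlinarith
    have hsq : Real.sqrt (qq ε x) ≤ ε := by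
      calc Real.sqrt (qq ε x) ≤ Real.sqrt (ε^2) := Real.sqrt_le_sqrt hq
        _ = ε := Real.sqrt_sq hε0.le
    have hqpos := qq_pos hε0 x
    have hsqpos := Real.sqrt_pos.2 hqpos
    apply one_div_le_one_div_of_le (by positivity)
    calc qq ε x * Real.sqrt (qq ε x) ≤ ε^2 * ε := by
          apply mul_le_mul hq hsq hsqpos.le (by positivity)
      _ = ε^3 := by ring
  linarith

lemma J3_upper (hε0 : 0 < ε) (hε1 : ε ≤ 1/2) :
    (∫ x in (0:ℝ)..π, 1 / (qq ε x * Real.sqrt (qq ε x))) ≤ 20/ε^2 := by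
  have hπ := Real.pi_gt_three
  have hint : ∀ a b : ℝ, IntervalIntegrable
      (fun x => 1 / (qq ε x * Real.sqrt (qq ε x))) volume a b :=
    fun a b => (cont3 hε0).intervalIntegrable a b
  have hsplit : (∫ x in (0:ℝ)..π, 1 / (qq ε x * Real.sqrt (qq ε x))) =
      (∫ x in (0:ℝ)..ε, 1 / (qq ε x * Real.sqrt (qq ε x)))
      + ∫ x in ε..π, 1 / (qq ε x * Real.sqrt (qq ε x)) := by
    rw [intervalIntegral.integral_add_adjacent_intervals (hint 0 ε) (hint ε π)]
  have h1 : (∫ x in (0:ℝ)..ε, 1 / (qq ε x * Real.sqrt (qq ε x))) ≤ 4/ε^2 := by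
    have hc : (∫ x in (0:ℝ)..ε, (4/ε^3)) = 4/ε^2 := by
      rw [intervalIntegral.integral_const, smul_eq_mul]
      field_simp
      ring
    rw [← hc]
    apply intervalIntegral.integral_mono_on hε0.le (hint 0 ε) intervalIntegrable_const
    intro x _
    have hq := qq_ge_eps (ε := ε) x
    have hsq := sqrt_qq_ge_eps hε0 x
    have hqpos := qq_pos hε0 x
    have hsqpos := Real.sqrt_pos.2 hqpos
    have hlow : ε^3/4 ≤ qq ε x * Real.sqrt (qq ε x) := by
      calc ε^3/4 = (ε^2/2) * (ε/2) := by ring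
        _ ≤ qq ε x * Real.sqrt (qq ε x) := by
            apply mul_le_mul hq hsq (by positivity) hqpos.le
    calc 1 / (qq ε x * Real.sqrt (qq ε x)) ≤ 1 / (ε^3/4) :=
          one_div_le_one_div_of_le (by positivity) hlow
      _ = 4/ε^3 := by field_simp
  have hiz : IntervalIntegrable (fun x : ℝ => 32 * x^(-3:ℤ)) volume ε π := by
    apply ContinuousOn.intervalIntegrable
    apply continuousOn_const.mul
    apply ContinuousOn.zpow₀ continuousOn_id
    intro x hx
    rw [Set.uIcc_of_le (by linarith)] at hx
    exact Or.inl (ne_of_gt (lt_of_lt_of_le hε0 hx.1))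
  have h2 : (∫ x in ε..π, 1 / (qq ε x * Real.sqrt (qq ε x))) ≤ 16/ε^2 := by
    have hcalc : (∫ x in ε..π, 32 * x^(-3:ℤ)) = 32 * ((π^(-2:ℤ) - ε^(-2:ℤ))/(-2:ℝ)) := by
      rw [intervalIntegral.integral_const_mul, integral_zpow (Or.inr ⟨by norm_num, by
        rw [Set.uIcc_of_le (by linarith)]
        intro h
        exact absurd h.1 (by linarith)⟩)]
      norm_num
    have hmono : (∫ x in ε..π, 1 / (qq ε x * Real.sqrt (qq ε x)))
        ≤ ∫ x in ε..π, 32 * x^(-3:ℤ) := by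
      apply intervalIntegral.integral_mono_on (by linarith) (hint ε π) hiz
      intro x hx
      obtain ⟨hx1, hx2⟩ := hx
      have hxpos : 0 < x := lt_of_lt_of_le hε0 hx1
      have habs : |x| ≤ π := by rw [abs_of_pos hxpos]; exact hx2
      have hq := qq_ge (ε := ε) habs
      have hsq := sqrt_qq_ge_x (ε := ε) hxpos.le habs
      have hqpos := qq_pos hε0 x
      have hlow : x^3/32 ≤ qq ε x * Real.sqrt (qq ε x) := by
        calc x^3/32 = (x^2/8) * (x/4) := by ring
          _ ≤ qq ε x * Real.sqrt (qq ε x) := by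
              apply mul_le_mul hq hsq (by positivity) hqpos.le
      calc 1 / (qq ε x * Real.sqrt (qq ε x)) ≤ 1 / (x^3/32) :=
            one_div_le_one_div_of_le (by positivity) hlow
        _ = 32 * x^(-3:ℤ) := by
            rw [zpow_neg]
            rw [show ((3:ℤ) : ℤ) = (3:ℕ) by norm_num]
            rw [zpow_natCast]
            field_simp
    have hfin : 32 * ((π^(-2:ℤ) - ε^(-2:ℤ))/(-2:ℝ)) ≤ 16/ε^2 := by
      have hp2 : (0:ℝ) < π^(-2:ℤ) := by positivity
      have he2 : (ε:ℝ)^(-2:ℤ) = 1/ε^2 := by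
        rw [zpow_neg, show ((2:ℤ) : ℤ) = (2:ℕ) by norm_num, zpow_natCast, one_div]
      rw [he2]
      have e16 : (16:ℝ)/ε^2 = 16*(1/ε^2) := by ring
      nlinarith
    rw [hcalc] at hmono
    linarith
  have e4 : (4:ℝ)/ε^2 = 4*(1/ε^2) := by ring
  have e16 : (16:ℝ)/ε^2 = 16*(1/ε^2) := by ring
  have e20 : (20:ℝ)/ε^2 = 20*(1/ε^2) := by ring
  linarith

lemma Jm_lower (hε0 : 0 < ε) (hε1 : ε ≤ 1/2) :
    π/2 ≤ ∫ x in (0:ℝ)..π, Real.sqrt (qq ε x) := by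
  have hπ := Real.pi_gt_three
  have hint : ∀ a b : ℝ, IntervalIntegrable (fun x => Real.sqrt (qq ε x)) volume a b :=
    fun a b => (qq_cont.sqrt).intervalIntegrable a b
  have hsplit : (∫ x in (0:ℝ)..π, Real.sqrt (qq ε x)) =
      (∫ x in (0:ℝ)..(π/2), Real.sqrt (qq ε x)) + ∫ x in (π/2)..π, Real.sqrt (qq ε x) := by
    rw [intervalIntegral.integral_add_adjacent_intervals (hint 0 (π/2)) (hint (π/2) π)]
  have h1 : (0:ℝ) ≤ ∫ x in (0:ℝ)..(π/2), Real.sqrt (qq ε x) := by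
    apply intervalIntegral.integral_nonneg (by linarith)
    intro x _; positivity
  have h2 : π/2 ≤ ∫ x in (π/2)..π, Real.sqrt (qq ε x) := by
    have hc : (∫ x in (π/2)..π, (1:ℝ)) = π/2 := by
      rw [intervalIntegral.integral_const, smul_eq_mul]
      ring
    refine le_trans (le_of_eq hc.symm) ?_
    apply intervalIntegral.integral_mono_on (by linarith) intervalIntegrable_const
      (hint (π/2) π)
    intro x hx
    obtain ⟨hx1, hx2⟩ := hx
    have hcos : Real.cos x ≤ 0 := Real.cos_nonpos_of_pi_div_two_le_of_le hx1 (by linarith)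
    have hq : 1 ≤ qq ε x := by unfold qq; nlinarith
    calc (1:ℝ) = Real.sqrt 1 := Real.sqrt_one.symm
      _ ≤ Real.sqrt (qq ε x) := Real.sqrt_le_sqrt hq
  linarith

lemma Jm_upper (hε0 : 0 < ε) (hε1 : ε ≤ 1/2) :
    (∫ x in (0:ℝ)..π, Real.sqrt (qq ε x)) ≤ 2*π := by
  have hπ := Real.pi_gt_three
  have hint : ∀ a b : ℝ, IntervalIntegrable (fun x => Real.sqrt (qq ε x)) volume a b :=
    fun a b => (qq_cont.sqrt).intervalIntegrable a b
  have hc : (∫ x in (0:ℝ)..π, (2:ℝ)) = 2*π := by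
    rw [intervalIntegral.integral_const, smul_eq_mul]
    ring
  rw [← hc]
  apply intervalIntegral.integral_mono_on (by linarith) (hint 0 π) intervalIntegrable_const
  intro x _
  have hcos := Real.neg_one_le_cos x
  have hq : qq ε x ≤ 4 := by unfold qq; nlinarith
  calc Real.sqrt (qq ε x) ≤ Real.sqrt 4 := Real.sqrt_le_sqrt hq
    _ = 2 := by
        rw [show (4:ℝ) = 2^2 by norm_num, Real.sqrt_sq (by norm_num)]

end Jest
end CdotAux
namespace CdotAux

lemma shift_integral (f : ℝ → ℝ) :
    (∫ θ in (-(π/2))..(π/2), f θ) = ∫ x in (0:ℝ)..π, f (x - π/2) := by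
  rw [intervalIntegral.integral_comp_sub_right f (π/2),
    show (0:ℝ) - π/2 = -(π/2) by ring, show π - π/2 = π/2 by ring]

lemma hsplit_div (a b : ℝ) : 1/(a*b) = a⁻¹ * (1/b) := by
  rw [one_div, mul_inv, one_div]

section Est

variable {δ ε : ℝ} (hδ : δ ∈ Ioo (0:ℝ) 1) (hε0 : 0 < ε) (hε1 : ε ≤ 1/2)
  (hε2 : ε^2 ≤ 1 - δ)

include hδ hε0 hε1 hε2

lemma basic_facts :
    (∀ x : ℝ, 1 + ((-1 + δ*(1+ε^2/2)) + δ * -Real.cos x) = δ * qq ε x) ∧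
    (∀ x : ℝ, 1 - δ ≤ 1 - ((-1 + δ*(1+ε^2/2)) + δ * -Real.cos x)) ∧
    (∀ x : ℝ, 1 - ((-1 + δ*(1+ε^2/2)) + δ * -Real.cos x) ≤ 2) ∧
    (∀ x : ℝ, ((1-δ)*δ) * qq ε x ≤ 1 - ((-1 + δ*(1+ε^2/2)) + δ * -Real.cos x)^2) ∧
    (∀ x : ℝ, 1 - ((-1 + δ*(1+ε^2/2)) + δ * -Real.cos x)^2 ≤ (2*δ) * qq ε x) ∧
    (∀ x : ℝ, 0 < 1 - ((-1 + δ*(1+ε^2/2)) + δ * -Real.cos x)^2) ∧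
    (∀ θ : ℝ, 0 < 1 - ((-1 + δ*(1+ε^2/2)) + δ * Real.sin θ)^2) := by
  obtain ⟨hδ0, hδ1⟩ := hδ
  have h1u : ∀ x : ℝ, 1 + ((-1 + δ*(1+ε^2/2)) + δ * -Real.cos x) = δ * qq ε x := by
    intro x; unfold qq; ring
  have hp1 : ∀ x : ℝ, 1 - δ ≤ 1 - ((-1 + δ*(1+ε^2/2)) + δ * -Real.cos x) := by
    intro x; have := Real.neg_one_le_cos x; nlinarith
  have hp2 : ∀ x : ℝ, 1 - ((-1 + δ*(1+ε^2/2)) + δ * -Real.cos x) ≤ 2 := by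
    intro x; have := Real.cos_le_one x; nlinarith
  have hvlow : ∀ x : ℝ, ((1-δ)*δ) * qq ε x ≤ 1 - ((-1 + δ*(1+ε^2/2)) + δ * -Real.cos x)^2 := by
    intro x
    have hq := qq_pos hε0 x
    have hAB : (1-δ)*(δ * qq ε x) ≤ (1 - ((-1 + δ*(1+ε^2/2)) + δ * -Real.cos x))
        * (1 + ((-1 + δ*(1+ε^2/2)) + δ * -Real.cos x)) := by
      rw [h1u x]
      apply mul_le_mul_of_nonneg_right (hp1 x) (by positivity)
    nlinarith [hAB]
  have hvup : ∀ x : ℝ, 1 - ((-1 + δ*(1+ε^2/2)) + δ * -Real.cos x)^2 ≤ (2*δ) * qq ε x := by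
    intro x
    have hq := qq_pos hε0 x
    have hAB : (1 - ((-1 + δ*(1+ε^2/2)) + δ * -Real.cos x))
        * (1 + ((-1 + δ*(1+ε^2/2)) + δ * -Real.cos x)) ≤ 2*(δ * qq ε x) := by
      rw [h1u x]
      apply mul_le_mul_of_nonneg_right (hp2 x) (by positivity)
    nlinarith [hAB]
  have hv0 : ∀ x : ℝ, 0 < 1 - ((-1 + δ*(1+ε^2/2)) + δ * -Real.cos x)^2 := by
    intro x
    have hq := qq_pos hε0 x
    have h1δ : (0:ℝ) < 1 - δ := by linarith
    have hpos : 0 < (1-δ)*δ*qq ε x := mul_pos (mul_pos h1δ hδ0) hq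
    linarith [hvlow x]
  refine ⟨h1u, hp1, hp2, hvlow, hvup, hv0, ?_⟩
  intro θ
  have h1 : δ*(ε^2/2) ≤ 1 + ((-1 + δ*(1+ε^2/2)) + δ * Real.sin θ) := by
    have := Real.neg_one_le_sin θ; nlinarith
  have h2 : 1 - δ ≤ 1 - ((-1 + δ*(1+ε^2/2)) + δ * Real.sin θ) := by
    have := Real.sin_le_one θ; nlinarith
  have ha : 0 < 1 + ((-1 + δ*(1+ε^2/2)) + δ * Real.sin θ) :=
    lt_of_lt_of_le (by positivity) h1
  have hb : 0 < 1 - ((-1 + δ*(1+ε^2/2)) + δ * Real.sin θ) :=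
    lt_of_lt_of_le (by linarith) h2
  nlinarith [mul_pos hb ha]

lemma Dint_bounds :
    (Real.sqrt (2*δ))⁻¹ * (-Real.log ε) ≤ Dint δ (-1 + δ*(1+ε^2/2)) ∧
    Dint δ (-1 + δ*(1+ε^2/2)) ≤ (Real.sqrt ((1-δ)*δ))⁻¹ * (26*(-Real.log ε)) := by
  obtain ⟨h1u, hp1, hp2, hvlow, hvup, hv0, hv0θ⟩ := basic_facts hδ hε0 hε1 hε2
  obtain ⟨hδ0, hδ1⟩ := hδ
  have h1δ : (0:ℝ) < 1 - δ := by linarith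
  have hgd : (0:ℝ) < (1-δ)*δ := mul_pos h1δ hδ0
  have hqpos := qq_pos hε0
  have hshift : Dint δ (-1 + δ*(1+ε^2/2)) =
      ∫ x in (0:ℝ)..π, 1 / Real.sqrt (1 - ((-1 + δ*(1+ε^2/2)) + δ * -Real.cos x)^2) := by
    rw [Dint, shift_integral (fun θ => 1 / Real.sqrt (1 - ((-1 + δ*(1+ε^2/2)) + δ * Real.sin θ)^2))]
    apply intervalIntegral.integral_congr
    intro x _
    simp only [Real.sin_sub_pi_div_two]
  have hcont : Continuous fun x : ℝ =>
      1 / Real.sqrt (1 - ((-1 + δ*(1+ε^2/2)) + δ * -Real.cos x)^2) := by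
    apply continuous_const.div
    · exact (continuous_const.sub ((continuous_const.add
        (continuous_const.mul Real.continuous_cos.neg)).pow 2)).sqrt
    · intro x
      exact ne_of_gt (Real.sqrt_pos.2 (hv0 x))
  -- sqrt sandwich
  have hsu : ∀ x : ℝ, Real.sqrt (1 - ((-1 + δ*(1+ε^2/2)) + δ * -Real.cos x)^2)
      ≤ Real.sqrt (2*δ) * Real.sqrt (qq ε x) := by
    intro x
    rw [← Real.sqrt_mul (by positivity)]
    exact Real.sqrt_le_sqrt (hvup x)
  have hsl : ∀ x : ℝ, Real.sqrt ((1-δ)*δ) * Real.sqrt (qq ε x)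
      ≤ Real.sqrt (1 - ((-1 + δ*(1+ε^2/2)) + δ * -Real.cos x)^2) := by
    intro x
    rw [← Real.sqrt_mul hgd.le]
    exact Real.sqrt_le_sqrt (hvlow x)
  rw [hshift]
  constructor
  · calc (Real.sqrt (2*δ))⁻¹ * (-Real.log ε)
        ≤ (Real.sqrt (2*δ))⁻¹ * (∫ x in (0:ℝ)..π, 1 / Real.sqrt (qq ε x)) := by
          apply mul_le_mul_of_nonneg_left (J1_lower hε0 hε1) (by positivity)
      _ ≤ _ := by
          rw [← intervalIntegral.integral_const_mul]
          apply intervalIntegral.integral_mono_on Real.pi_pos.le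
            ((continuous_const.mul (cont1 hε0)).intervalIntegrable 0 π) (hcont.intervalIntegrable 0 π)
          intro x _
          simp only [Pi.mul_apply]
          rw [← hsplit_div]
          apply one_div_le_one_div_of_le (Real.sqrt_pos.2 (hv0 x)) (hsu x)
  · calc (∫ x in (0:ℝ)..π, 1 / Real.sqrt (1 - ((-1 + δ*(1+ε^2/2)) + δ * -Real.cos x)^2))
        ≤ (Real.sqrt ((1-δ)*δ))⁻¹ * (∫ x in (0:ℝ)..π, 1 / Real.sqrt (qq ε x)) := by
          rw [← intervalIntegral.integral_const_mul]
          apply intervalIntegral.integral_mono_on Real.pi_pos.le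
            (hcont.intervalIntegrable 0 π) ((continuous_const.mul (cont1 hε0)).intervalIntegrable 0 π)
          intro x _
          simp only [Pi.mul_apply]
          rw [← hsplit_div]
          apply one_div_le_one_div_of_le
            (mul_pos (Real.sqrt_pos.2 hgd) (Real.sqrt_pos.2 (hqpos x))) (hsl x)
      _ ≤ _ := by
          apply mul_le_mul_of_nonneg_left (J1_upper hε0 hε1) (by positivity)

lemma N'int_bounds :
    ((2*δ) * Real.sqrt (2*δ))⁻¹ * (1/ε^2) ≤ N'int δ (-1 + δ*(1+ε^2/2)) ∧
    N'int δ (-1 + δ*(1+ε^2/2)) ≤ (((1-δ)*δ) * Real.sqrt ((1-δ)*δ))⁻¹ * (20/ε^2) := by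
  obtain ⟨h1u, hp1, hp2, hvlow, hvup, hv0, hv0θ⟩ := basic_facts hδ hε0 hε1 hε2
  obtain ⟨hδ0, hδ1⟩ := hδ
  have h1δ : (0:ℝ) < 1 - δ := by linarith
  have hgd : (0:ℝ) < (1-δ)*δ := mul_pos h1δ hδ0
  have hqpos := qq_pos hε0
  have hshift : N'int δ (-1 + δ*(1+ε^2/2)) =
      ∫ x in (0:ℝ)..π, 1 / ((1 - ((-1 + δ*(1+ε^2/2)) + δ * -Real.cos x)^2) *
        Real.sqrt (1 - ((-1 + δ*(1+ε^2/2)) + δ * -Real.cos x)^2)) := by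
    rw [N'int, shift_integral (fun θ => 1 / ((1 - ((-1 + δ*(1+ε^2/2)) + δ * Real.sin θ)^2) *
      Real.sqrt (1 - ((-1 + δ*(1+ε^2/2)) + δ * Real.sin θ)^2)))]
    apply intervalIntegral.integral_congr
    intro x _
    simp only [Real.sin_sub_pi_div_two]
  have hcont : Continuous fun x : ℝ =>
      1 / ((1 - ((-1 + δ*(1+ε^2/2)) + δ * -Real.cos x)^2) *
        Real.sqrt (1 - ((-1 + δ*(1+ε^2/2)) + δ * -Real.cos x)^2)) := by
    have hc : Continuous fun x : ℝ => 1 - ((-1 + δ*(1+ε^2/2)) + δ * -Real.cos x)^2 :=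
      continuous_const.sub ((continuous_const.add
        (continuous_const.mul Real.continuous_cos.neg)).pow 2)
    apply continuous_const.div (hc.mul hc.sqrt)
    intro x
    exact ne_of_gt (mul_pos (hv0 x) (Real.sqrt_pos.2 (hv0 x)))
  have hsu : ∀ x : ℝ, Real.sqrt (1 - ((-1 + δ*(1+ε^2/2)) + δ * -Real.cos x)^2)
      ≤ Real.sqrt (2*δ) * Real.sqrt (qq ε x) := by
    intro x
    rw [← Real.sqrt_mul (by positivity)]
    exact Real.sqrt_le_sqrt (hvup x)
  have hsl : ∀ x : ℝ, Real.sqrt ((1-δ)*δ) * Real.sqrt (qq ε x)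
      ≤ Real.sqrt (1 - ((-1 + δ*(1+ε^2/2)) + δ * -Real.cos x)^2) := by
    intro x
    rw [← Real.sqrt_mul hgd.le]
    exact Real.sqrt_le_sqrt (hvlow x)
  -- product sandwich for v * sqrt v
  have hml : ∀ x : ℝ, (((1-δ)*δ) * Real.sqrt ((1-δ)*δ)) * (qq ε x * Real.sqrt (qq ε x))
      ≤ (1 - ((-1 + δ*(1+ε^2/2)) + δ * -Real.cos x)^2) *
        Real.sqrt (1 - ((-1 + δ*(1+ε^2/2)) + δ * -Real.cos x)^2) := by
    intro x
    have := mul_le_mul (hvlow x) (hsl x)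
      (mul_nonneg (Real.sqrt_nonneg _) (Real.sqrt_nonneg _)) (hv0 x).le
    nlinarith [this]
  have hmu : ∀ x : ℝ, (1 - ((-1 + δ*(1+ε^2/2)) + δ * -Real.cos x)^2) *
        Real.sqrt (1 - ((-1 + δ*(1+ε^2/2)) + δ * -Real.cos x)^2)
      ≤ ((2*δ) * Real.sqrt (2*δ)) * (qq ε x * Real.sqrt (qq ε x)) := by
    intro x
    have := mul_le_mul (hvup x) (hsu x) (Real.sqrt_nonneg _) (mul_nonneg (by positivity) (hqpos x).le)
    nlinarith [this]
  have hm0 : ∀ x : ℝ, 0 < (1 - ((-1 + δ*(1+ε^2/2)) + δ * -Real.cos x)^2) *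
        Real.sqrt (1 - ((-1 + δ*(1+ε^2/2)) + δ * -Real.cos x)^2) := by
    intro x
    exact mul_pos (hv0 x) (Real.sqrt_pos.2 (hv0 x))
  rw [hshift]
  constructor
  · calc ((2*δ) * Real.sqrt (2*δ))⁻¹ * (1/ε^2)
        ≤ ((2*δ) * Real.sqrt (2*δ))⁻¹ * (∫ x in (0:ℝ)..π, 1 / (qq ε x * Real.sqrt (qq ε x))) := by
          apply mul_le_mul_of_nonneg_left (J3_lower hε0 hε1) (by positivity)
      _ ≤ _ := by
          rw [← intervalIntegral.integral_const_mul]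
          apply intervalIntegral.integral_mono_on Real.pi_pos.le
            ((continuous_const.mul (cont3 hε0)).intervalIntegrable 0 π) (hcont.intervalIntegrable 0 π)
          intro x _
          simp only [Pi.mul_apply]
          rw [← hsplit_div]
          apply one_div_le_one_div_of_le (hm0 x) (hmu x)
  · calc (∫ x in (0:ℝ)..π, 1 / ((1 - ((-1 + δ*(1+ε^2/2)) + δ * -Real.cos x)^2) *
        Real.sqrt (1 - ((-1 + δ*(1+ε^2/2)) + δ * -Real.cos x)^2)))
        ≤ (((1-δ)*δ) * Real.sqrt ((1-δ)*δ))⁻¹ *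
          (∫ x in (0:ℝ)..π, 1 / (qq ε x * Real.sqrt (qq ε x))) := by
          rw [← intervalIntegral.integral_const_mul]
          apply intervalIntegral.integral_mono_on Real.pi_pos.le
            (hcont.intervalIntegrable 0 π) ((continuous_const.mul (cont3 hε0)).intervalIntegrable 0 π)
          intro x _
          simp only [Pi.mul_apply]
          rw [← hsplit_div]
          apply one_div_le_one_div_of_le
            (mul_pos (mul_pos hgd (Real.sqrt_pos.2 hgd))
              (mul_pos (hqpos x) (Real.sqrt_pos.2 (hqpos x)))) (hml x)
      _ ≤ _ := by
          apply mul_le_mul_of_nonneg_left (J3_upper hε0 hε1) (by positivity)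

end Est
end CdotAux
namespace CdotAux

section Est2

variable {δ ε : ℝ} (hδ : δ ∈ Ioo (0:ℝ) 1) (hε0 : 0 < ε) (hε1 : ε ≤ 1/2)
  (hε2 : ε^2 ≤ 1 - δ)

include hδ hε0 hε1 hε2

lemma R_bounds :
    (δ / Real.sqrt (2*δ)) * (π/2) ≤
      Nint δ (-1 + δ*(1+ε^2/2)) + Dint δ (-1 + δ*(1+ε^2/2)) ∧
    Nint δ (-1 + δ*(1+ε^2/2)) + Dint δ (-1 + δ*(1+ε^2/2)) ≤
      (δ / Real.sqrt ((1-δ)*δ)) * (2*π) := by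
  obtain ⟨h1u, hp1, hp2, hvlow, hvup, hv0, hv0θ⟩ := basic_facts hδ hε0 hε1 hε2
  obtain ⟨hδ0, hδ1⟩ := hδ
  have h1δ : (0:ℝ) < 1 - δ := by linarith
  have hgd : (0:ℝ) < (1-δ)*δ := mul_pos h1δ hδ0
  have hqpos := qq_pos hε0
  have hvcontθ : Continuous fun θ : ℝ => 1 - ((-1 + δ*(1+ε^2/2)) + δ * Real.sin θ)^2 :=
    continuous_const.sub ((continuous_const.add
      (continuous_const.mul Real.continuous_sin)).pow 2)
  have hcontN : Continuous fun θ : ℝ => ((-1 + δ*(1+ε^2/2)) + δ * Real.sin θ) /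
      Real.sqrt (1 - ((-1 + δ*(1+ε^2/2)) + δ * Real.sin θ)^2) := by
    apply Continuous.div (continuous_const.add (continuous_const.mul Real.continuous_sin))
      hvcontθ.sqrt
    intro θ; exact ne_of_gt (Real.sqrt_pos.2 (hv0θ θ))
  have hcontD : Continuous fun θ : ℝ => 1 /
      Real.sqrt (1 - ((-1 + δ*(1+ε^2/2)) + δ * Real.sin θ)^2) := by
    apply continuous_const.div hvcontθ.sqrt
    intro θ; exact ne_of_gt (Real.sqrt_pos.2 (hv0θ θ))
  have hsum : Nint δ (-1 + δ*(1+ε^2/2)) + Dint δ (-1 + δ*(1+ε^2/2)) =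
      ∫ x in (0:ℝ)..π, (δ * qq ε x) /
        Real.sqrt (1 - ((-1 + δ*(1+ε^2/2)) + δ * -Real.cos x)^2) := by
    rw [Nint, Dint, ← intervalIntegral.integral_add (hcontN.intervalIntegrable _ _)
      (hcontD.intervalIntegrable _ _)]
    rw [show (fun θ => ((-1 + δ*(1+ε^2/2)) + δ * Real.sin θ) /
        Real.sqrt (1 - ((-1 + δ*(1+ε^2/2)) + δ * Real.sin θ)^2) +
        1 / Real.sqrt (1 - ((-1 + δ*(1+ε^2/2)) + δ * Real.sin θ)^2)) =
      (fun θ => (((-1 + δ*(1+ε^2/2)) + δ * Real.sin θ) + 1) /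
        Real.sqrt (1 - ((-1 + δ*(1+ε^2/2)) + δ * Real.sin θ)^2)) from
      funext fun θ => (add_div _ _ _).symm]
    rw [shift_integral (fun θ => (((-1 + δ*(1+ε^2/2)) + δ * Real.sin θ) + 1) /
      Real.sqrt (1 - ((-1 + δ*(1+ε^2/2)) + δ * Real.sin θ)^2))]
    apply intervalIntegral.integral_congr
    intro x _
    simp only [Real.sin_sub_pi_div_two]
    rw [show ((-1 + δ*(1+ε^2/2)) + δ * -Real.cos x) + 1
        = 1 + ((-1 + δ*(1+ε^2/2)) + δ * -Real.cos x) by ring, h1u x]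
  have hsu : ∀ x : ℝ, Real.sqrt (1 - ((-1 + δ*(1+ε^2/2)) + δ * -Real.cos x)^2)
      ≤ Real.sqrt (2*δ) * Real.sqrt (qq ε x) := by
    intro x
    rw [← Real.sqrt_mul (by positivity)]
    exact Real.sqrt_le_sqrt (hvup x)
  have hsl : ∀ x : ℝ, Real.sqrt ((1-δ)*δ) * Real.sqrt (qq ε x)
      ≤ Real.sqrt (1 - ((-1 + δ*(1+ε^2/2)) + δ * -Real.cos x)^2) := by
    intro x
    rw [← Real.sqrt_mul hgd.le]
    exact Real.sqrt_le_sqrt (hvlow x)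
  have hcontI : Continuous fun x : ℝ => (δ * qq ε x) /
      Real.sqrt (1 - ((-1 + δ*(1+ε^2/2)) + δ * -Real.cos x)^2) := by
    apply Continuous.div (continuous_const.mul qq_cont)
      ((continuous_const.sub ((continuous_const.add
        (continuous_const.mul Real.continuous_cos.neg)).pow 2)).sqrt)
    intro x; exact ne_of_gt (Real.sqrt_pos.2 (hv0 x))
  -- pointwise bounds
  have hptl : ∀ x : ℝ, (δ / Real.sqrt (2*δ)) * Real.sqrt (qq ε x) ≤
      (δ * qq ε x) / Real.sqrt (1 - ((-1 + δ*(1+ε^2/2)) + δ * -Real.cos x)^2) := by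
    intro x
    have heq : (δ / Real.sqrt (2*δ)) * Real.sqrt (qq ε x)
        = (δ * qq ε x) * (1 / (Real.sqrt (2*δ) * Real.sqrt (qq ε x))) := by
      rw [hsplit_div]
      rw [show (δ * qq ε x) * ((Real.sqrt (2*δ))⁻¹ * (1/Real.sqrt (qq ε x)))
          = (δ * (Real.sqrt (2*δ))⁻¹) * (qq ε x / Real.sqrt (qq ε x)) by ring]
      rw [Real.div_sqrt]
      ring
    rw [heq, div_eq_mul_one_div (δ * qq ε x)]
    apply mul_le_mul_of_nonneg_left _ (mul_nonneg hδ0.le (hqpos x).le)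
    apply one_div_le_one_div_of_le (Real.sqrt_pos.2 (hv0 x)) (hsu x)
  have hptu : ∀ x : ℝ,
      (δ * qq ε x) / Real.sqrt (1 - ((-1 + δ*(1+ε^2/2)) + δ * -Real.cos x)^2) ≤
      (δ / Real.sqrt ((1-δ)*δ)) * Real.sqrt (qq ε x) := by
    intro x
    have heq : (δ / Real.sqrt ((1-δ)*δ)) * Real.sqrt (qq ε x)
        = (δ * qq ε x) * (1 / (Real.sqrt ((1-δ)*δ) * Real.sqrt (qq ε x))) := by
      rw [hsplit_div]
      rw [show (δ * qq ε x) * ((Real.sqrt ((1-δ)*δ))⁻¹ * (1/Real.sqrt (qq ε x)))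
          = (δ * (Real.sqrt ((1-δ)*δ))⁻¹) * (qq ε x / Real.sqrt (qq ε x)) by ring]
      rw [Real.div_sqrt]
      ring
    rw [heq, div_eq_mul_one_div (δ * qq ε x)]
    apply mul_le_mul_of_nonneg_left _ (mul_nonneg hδ0.le (hqpos x).le)
    apply one_div_le_one_div_of_le
      (mul_pos (Real.sqrt_pos.2 hgd) (Real.sqrt_pos.2 (hqpos x))) (hsl x)
  rw [hsum]
  constructor
  · calc (δ / Real.sqrt (2*δ)) * (π/2)
        ≤ (δ / Real.sqrt (2*δ)) * (∫ x in (0:ℝ)..π, Real.sqrt (qq ε x)) :=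
          mul_le_mul_of_nonneg_left (Jm_lower hε0 hε1) (by positivity)
      _ ≤ _ := by
          rw [← intervalIntegral.integral_const_mul]
          apply intervalIntegral.integral_mono_on Real.pi_pos.le
            ((continuous_const.mul qq_cont.sqrt).intervalIntegrable 0 π)
            (hcontI.intervalIntegrable 0 π)
          intro x _
          exact hptl x
  · calc (∫ x in (0:ℝ)..π, (δ * qq ε x) /
        Real.sqrt (1 - ((-1 + δ*(1+ε^2/2)) + δ * -Real.cos x)^2))
        ≤ (δ / Real.sqrt ((1-δ)*δ)) * (∫ x in (0:ℝ)..π, Real.sqrt (qq ε x)) := by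
          rw [← intervalIntegral.integral_const_mul]
          apply intervalIntegral.integral_mono_on Real.pi_pos.le
            (hcontI.intervalIntegrable 0 π)
            ((continuous_const.mul qq_cont.sqrt).intervalIntegrable 0 π)
          intro x _
          exact hptu x
      _ ≤ _ :=
          mul_le_mul_of_nonneg_left (Jm_upper hε0 hε1) (by positivity)

lemma S_bounds :
    0 ≤ N'int δ (-1 + δ*(1+ε^2/2)) + D'int δ (-1 + δ*(1+ε^2/2)) ∧
    N'int δ (-1 + δ*(1+ε^2/2)) + D'int δ (-1 + δ*(1+ε^2/2)) ≤
      (δ / (((1-δ)*δ) * Real.sqrt ((1-δ)*δ))) * (26*(-Real.log ε)) := by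
  obtain ⟨h1u, hp1, hp2, hvlow, hvup, hv0, hv0θ⟩ := basic_facts hδ hε0 hε1 hε2
  obtain ⟨hδ0, hδ1⟩ := hδ
  have h1δ : (0:ℝ) < 1 - δ := by linarith
  have hgd : (0:ℝ) < (1-δ)*δ := mul_pos h1δ hδ0
  have hqpos := qq_pos hε0
  have h1uθ : ∀ θ : ℝ, 0 ≤ 1 + ((-1 + δ*(1+ε^2/2)) + δ * Real.sin θ) := by
    intro θ
    have := Real.neg_one_le_sin θ; nlinarith
  have hvcontθ : Continuous fun θ : ℝ => 1 - ((-1 + δ*(1+ε^2/2)) + δ * Real.sin θ)^2 :=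
    continuous_const.sub ((continuous_const.add
      (continuous_const.mul Real.continuous_sin)).pow 2)
  have hden : ∀ θ : ℝ, 0 < (1 - ((-1 + δ*(1+ε^2/2)) + δ * Real.sin θ)^2) *
      Real.sqrt (1 - ((-1 + δ*(1+ε^2/2)) + δ * Real.sin θ)^2) := by
    intro θ; exact mul_pos (hv0θ θ) (Real.sqrt_pos.2 (hv0θ θ))
  have hcontN' : Continuous fun θ : ℝ => 1 /
      ((1 - ((-1 + δ*(1+ε^2/2)) + δ * Real.sin θ)^2) *
        Real.sqrt (1 - ((-1 + δ*(1+ε^2/2)) + δ * Real.sin θ)^2)) := by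
    apply continuous_const.div (hvcontθ.mul hvcontθ.sqrt)
    intro θ; exact ne_of_gt (hden θ)
  have hcontD' : Continuous fun θ : ℝ => ((-1 + δ*(1+ε^2/2)) + δ * Real.sin θ) /
      ((1 - ((-1 + δ*(1+ε^2/2)) + δ * Real.sin θ)^2) *
        Real.sqrt (1 - ((-1 + δ*(1+ε^2/2)) + δ * Real.sin θ)^2)) := by
    apply Continuous.div (continuous_const.add (continuous_const.mul Real.continuous_sin))
      (hvcontθ.mul hvcontθ.sqrt)
    intro θ; exact ne_of_gt (hden θ)
  have hsumθ : N'int δ (-1 + δ*(1+ε^2/2)) + D'int δ (-1 + δ*(1+ε^2/2)) =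
      ∫ θ in (-(π/2))..(π/2), (1 + ((-1 + δ*(1+ε^2/2)) + δ * Real.sin θ)) /
        ((1 - ((-1 + δ*(1+ε^2/2)) + δ * Real.sin θ)^2) *
          Real.sqrt (1 - ((-1 + δ*(1+ε^2/2)) + δ * Real.sin θ)^2)) := by
    rw [N'int, D'int, ← intervalIntegral.integral_add (hcontN'.intervalIntegrable _ _)
      (hcontD'.intervalIntegrable _ _)]
    apply intervalIntegral.integral_congr
    intro θ _
    simp only [← add_div]
  constructor
  · rw [hsumθ]
    apply intervalIntegral.integral_nonneg (by linarith [Real.pi_pos])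
    intro θ _
    exact div_nonneg (h1uθ θ) (hden θ).le
  · have hshift : N'int δ (-1 + δ*(1+ε^2/2)) + D'int δ (-1 + δ*(1+ε^2/2)) =
        ∫ x in (0:ℝ)..π, (δ * qq ε x) /
          ((1 - ((-1 + δ*(1+ε^2/2)) + δ * -Real.cos x)^2) *
            Real.sqrt (1 - ((-1 + δ*(1+ε^2/2)) + δ * -Real.cos x)^2)) := by
      rw [hsumθ, shift_integral (fun θ => (1 + ((-1 + δ*(1+ε^2/2)) + δ * Real.sin θ)) /
        ((1 - ((-1 + δ*(1+ε^2/2)) + δ * Real.sin θ)^2) *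
          Real.sqrt (1 - ((-1 + δ*(1+ε^2/2)) + δ * Real.sin θ)^2)))]
      apply intervalIntegral.integral_congr
      intro x _
      simp only [Real.sin_sub_pi_div_two]
      rw [h1u x]
    rw [hshift]
    have hsl : ∀ x : ℝ, Real.sqrt ((1-δ)*δ) * Real.sqrt (qq ε x)
        ≤ Real.sqrt (1 - ((-1 + δ*(1+ε^2/2)) + δ * -Real.cos x)^2) := by
      intro x
      rw [← Real.sqrt_mul hgd.le]
      exact Real.sqrt_le_sqrt (hvlow x)
    have hml : ∀ x : ℝ, (((1-δ)*δ) * Real.sqrt ((1-δ)*δ)) * (qq ε x * Real.sqrt (qq ε x))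
        ≤ (1 - ((-1 + δ*(1+ε^2/2)) + δ * -Real.cos x)^2) *
          Real.sqrt (1 - ((-1 + δ*(1+ε^2/2)) + δ * -Real.cos x)^2) := by
      intro x
      have := mul_le_mul (hvlow x) (hsl x)
        (mul_nonneg (Real.sqrt_nonneg _) (Real.sqrt_nonneg _)) (hv0 x).le
      nlinarith [this]
    have hcontI : Continuous fun x : ℝ => (δ * qq ε x) /
        ((1 - ((-1 + δ*(1+ε^2/2)) + δ * -Real.cos x)^2) *
          Real.sqrt (1 - ((-1 + δ*(1+ε^2/2)) + δ * -Real.cos x)^2)) := by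
      have hc : Continuous fun x : ℝ => 1 - ((-1 + δ*(1+ε^2/2)) + δ * -Real.cos x)^2 :=
        continuous_const.sub ((continuous_const.add
          (continuous_const.mul Real.continuous_cos.neg)).pow 2)
      apply Continuous.div (continuous_const.mul qq_cont) (hc.mul hc.sqrt)
      intro x
      exact ne_of_gt (mul_pos (hv0 x) (Real.sqrt_pos.2 (hv0 x)))
    have hptu : ∀ x : ℝ, (δ * qq ε x) /
        ((1 - ((-1 + δ*(1+ε^2/2)) + δ * -Real.cos x)^2) *
          Real.sqrt (1 - ((-1 + δ*(1+ε^2/2)) + δ * -Real.cos x)^2))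
        ≤ (δ / (((1-δ)*δ) * Real.sqrt ((1-δ)*δ))) * (1 / Real.sqrt (qq ε x)) := by
      intro x
      have hq0 : qq ε x ≠ 0 := ne_of_gt (hqpos x)
      have hsq0 : Real.sqrt (qq ε x) ≠ 0 := ne_of_gt (Real.sqrt_pos.2 (hqpos x))
      have heq : (δ / (((1-δ)*δ) * Real.sqrt ((1-δ)*δ))) * (1 / Real.sqrt (qq ε x))
          = (δ * qq ε x) * (1 / ((((1-δ)*δ) * Real.sqrt ((1-δ)*δ)) *
            (qq ε x * Real.sqrt (qq ε x)))) := by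
        field_simp
      rw [heq, div_eq_mul_one_div (δ * qq ε x)]
      apply mul_le_mul_of_nonneg_left _ (mul_nonneg hδ0.le (hqpos x).le)
      apply one_div_le_one_div_of_le
        (mul_pos (mul_pos hgd (Real.sqrt_pos.2 hgd))
          (mul_pos (hqpos x) (Real.sqrt_pos.2 (hqpos x)))) (hml x)
    calc (∫ x in (0:ℝ)..π, (δ * qq ε x) /
        ((1 - ((-1 + δ*(1+ε^2/2)) + δ * -Real.cos x)^2) *
          Real.sqrt (1 - ((-1 + δ*(1+ε^2/2)) + δ * -Real.cos x)^2)))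
        ≤ (δ / (((1-δ)*δ) * Real.sqrt ((1-δ)*δ))) *
          (∫ x in (0:ℝ)..π, 1 / Real.sqrt (qq ε x)) := by
          rw [← intervalIntegral.integral_const_mul]
          apply intervalIntegral.integral_mono_on Real.pi_pos.le
            (hcontI.intervalIntegrable 0 π)
            ((continuous_const.mul (cont1 hε0)).intervalIntegrable 0 π)
          intro x _
          exact hptu x
      _ ≤ _ := by
          apply mul_le_mul_of_nonneg_left (J1_upper hε0 hε1) (by positivity)

end Est2
end CdotAux
namespace CdotAux

noncomputable def Cone (δ : ℝ) : ℝ :=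
  (((δ / Real.sqrt (2*δ)) * (π/2)) * ((2*δ) * Real.sqrt (2*δ))⁻¹) /
    (26 * (Real.sqrt ((1-δ)*δ))⁻¹)^2

noncomputable def Ctwo (δ : ℝ) : ℝ :=
  ((26 * (Real.sqrt ((1-δ)*δ))⁻¹) * (26 * (δ / (((1-δ)*δ) * Real.sqrt ((1-δ)*δ)))) +
    ((δ / Real.sqrt ((1-δ)*δ)) * (2*π)) * (20 * (((1-δ)*δ) * Real.sqrt ((1-δ)*δ))⁻¹)) /
    ((Real.sqrt (2*δ))⁻¹)^2

section Final

variable {δ ε : ℝ}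

lemma Cone_pos (hδ : δ ∈ Ioo (0:ℝ) 1) : 0 < Cone δ := by
  obtain ⟨hδ0, hδ1⟩ := hδ
  have h1δ : (0:ℝ) < 1 - δ := by linarith
  have hgd : (0:ℝ) < (1-δ)*δ := mul_pos h1δ hδ0
  have hs1 : 0 < Real.sqrt (2*δ) := Real.sqrt_pos.2 (by linarith)
  have hs2 : 0 < Real.sqrt ((1-δ)*δ) := Real.sqrt_pos.2 hgd
  unfold Cone
  have hπ := Real.pi_pos
  apply div_pos
  · apply mul_pos (mul_pos (div_pos hδ0 hs1) (by linarith))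
    exact inv_pos.2 (mul_pos (by linarith) hs1)
  · positivity

lemma Ctwo_pos (hδ : δ ∈ Ioo (0:ℝ) 1) : 0 < Ctwo δ := by
  obtain ⟨hδ0, hδ1⟩ := hδ
  have h1δ : (0:ℝ) < 1 - δ := by linarith
  have hgd : (0:ℝ) < (1-δ)*δ := mul_pos h1δ hδ0
  have hs1 : 0 < Real.sqrt (2*δ) := Real.sqrt_pos.2 (by linarith)
  have hs2 : 0 < Real.sqrt ((1-δ)*δ) := Real.sqrt_pos.2 hgd
  unfold Ctwo
  have hπ := Real.pi_pos
  apply div_pos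
  · apply add_pos
    · apply mul_pos (by positivity)
      exact mul_pos (by norm_num) (div_pos hδ0 (mul_pos hgd hs2))
    · apply mul_pos (mul_pos (div_pos hδ0 hs2) (by linarith))
      exact mul_pos (by norm_num) (inv_pos.2 (mul_pos hgd hs2))
  · positivity

lemma deriv_sandwich (hδ : δ ∈ Ioo (0:ℝ) 1) (hε0 : 0 < ε) (hε1 : ε ≤ 1/2)
    (hε2 : ε^2 ≤ 1 - δ)
    (hεR : (δ / Real.sqrt ((1-δ)*δ)) * (2*π) ≤ (Real.sqrt (2*δ))⁻¹ * (-Real.log ε)) :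
    Cone δ ≤ (ε * Real.log ε)^2 * deriv (cpt δ) (-1 + δ*(1+ε^2/2)) ∧
    (ε * Real.log ε)^2 * deriv (cpt δ) (-1 + δ*(1+ε^2/2)) ≤ Ctwo δ := by
  obtain ⟨hδ0, hδ1⟩ := hδ
  have h1δ : (0:ℝ) < 1 - δ := by linarith
  have hgd : (0:ℝ) < (1-δ)*δ := mul_pos h1δ hδ0
  have hs1 : 0 < Real.sqrt (2*δ) := Real.sqrt_pos.2 (by linarith)
  have hs2 : 0 < Real.sqrt ((1-δ)*δ) := Real.sqrt_pos.2 hgd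
  have hπ := Real.pi_pos
  have hα : (-1 + δ*(1+ε^2/2)) ∈ Ioo (δ-1) (1-δ) := by
    constructor
    · nlinarith [mul_pos hδ0 (mul_pos hε0 hε0)]
    · nlinarith [mul_nonneg h1δ.le (sq_nonneg ε)]
  have hderiv := deriv_cpt_eq δ ⟨hδ0, hδ1⟩ hα
  obtain ⟨hD1, hD2⟩ := Dint_bounds ⟨hδ0, hδ1⟩ hε0 hε1 hε2
  obtain ⟨hN1, hN2⟩ := N'int_bounds ⟨hδ0, hδ1⟩ hε0 hε1 hε2
  obtain ⟨hR1, hR2⟩ := R_bounds ⟨hδ0, hδ1⟩ hε0 hε1 hε2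
  obtain ⟨hS1, hS2⟩ := S_bounds ⟨hδ0, hδ1⟩ hε0 hε1 hε2
  set DD := Dint δ (-1 + δ*(1+ε^2/2)) with hDD
  set NN := Nint δ (-1 + δ*(1+ε^2/2)) with hNN
  set DD' := D'int δ (-1 + δ*(1+ε^2/2)) with hDD'
  set NN' := N'int δ (-1 + δ*(1+ε^2/2)) with hNN'
  set L := -Real.log ε with hLdef
  have hlogε : Real.log ε = -L := by rw [hLdef]; ring
  have hL2 : 1/2 ≤ L := log_bound hε0 hε1
  have hLp : 0 < L := by linarith
  have hεL : ε * L ≤ 1 := by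
    have h := Real.log_le_sub_one_of_pos (show (0:ℝ) < ε⁻¹ by positivity)
    rw [Real.log_inv] at h
    have h2 : L ≤ ε⁻¹ := by rw [hLdef]; linarith
    calc ε * L ≤ ε * ε⁻¹ := mul_le_mul_of_nonneg_left h2 hε0.le
      _ = 1 := mul_inv_cancel₀ (ne_of_gt hε0)
  have hT1 : ε^2 * L^2 ≤ 1 := by nlinarith [mul_pos hε0 hLp]
  -- abbreviations for constants
  set d1 := (Real.sqrt (2*δ))⁻¹ with hd1
  set d2 := 26 * (Real.sqrt ((1-δ)*δ))⁻¹ with hd2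
  set n1 := ((2*δ) * Real.sqrt (2*δ))⁻¹ with hn1
  set n2 := 20 * (((1-δ)*δ) * Real.sqrt ((1-δ)*δ))⁻¹ with hn2
  set r1 := (δ / Real.sqrt (2*δ)) * (π/2) with hr1
  set r2 := (δ / Real.sqrt ((1-δ)*δ)) * (2*π) with hr2
  set s2 := 26 * (δ / (((1-δ)*δ) * Real.sqrt ((1-δ)*δ))) with hs2'
  have hd1p : 0 < d1 := inv_pos.2 hs1
  have hd2p : 0 < d2 := mul_pos (by norm_num) (inv_pos.2 hs2)
  have hn1p : 0 < n1 := inv_pos.2 (mul_pos (by linarith) hs1)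
  have hn2p : 0 < n2 := mul_pos (by norm_num) (inv_pos.2 (mul_pos hgd hs2))
  have hr1p : 0 < r1 := mul_pos (div_pos hδ0 hs1) (by linarith)
  have hr2p : 0 < r2 := mul_pos (div_pos hδ0 hs2) (by linarith)
  have hs2p : 0 < s2 := mul_pos (by norm_num) (div_pos hδ0 (mul_pos hgd hs2))
  -- normalized bounds
  have hD2' : DD ≤ d2 * L := by
    calc DD ≤ (Real.sqrt ((1-δ)*δ))⁻¹ * (26 * L) := hD2
      _ = d2 * L := by rw [hd2]; ring
  have hN2' : NN' ≤ n2 * (1/ε^2) := by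
    calc NN' ≤ (((1-δ)*δ) * Real.sqrt ((1-δ)*δ))⁻¹ * (20/ε^2) := hN2
      _ = n2 * (1/ε^2) := by rw [hn2]; ring
  have hS2' : NN' + DD' ≤ s2 * L := by
    calc NN' + DD' ≤ (δ / (((1-δ)*δ) * Real.sqrt ((1-δ)*δ))) * (26 * L) := hS2
      _ = s2 * L := by rw [hs2']; ring
  have hDpos : 0 < DD := lt_of_lt_of_le (mul_pos hd1p hLp) hD1
  have hN'pos : 0 < NN' := lt_of_lt_of_le (mul_pos hn1p (by positivity)) hN1
  have hRpos : 0 < NN + DD := lt_of_lt_of_le hr1p hR1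
  have hDR : NN + DD ≤ DD := le_trans hR2 (le_trans hεR hD1)
  have hConeEq : Cone δ = (r1 * n1) / d2^2 := by
    unfold Cone
    rw [hr1, hn1, hd2]
  have hCtwoEq : Ctwo δ = (d2 * s2 + r2 * n2) / d1^2 := by
    unfold Ctwo
    rw [hd2, hs2', hr2, hn2, hd1]
  have hConep : 0 < Cone δ := by
    rw [hConeEq]; exact div_pos (mul_pos hr1p hn1p) (pow_pos hd2p 2)
  have hCtwop : 0 < Ctwo δ := by
    rw [hCtwoEq]
    exact div_pos (add_pos (mul_pos hd2p hs2p) (mul_pos hr2p hn2p)) (pow_pos hd1p 2)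
  have hsq : (ε * Real.log ε)^2 = ε^2 * L^2 := by rw [hlogε]; ring
  rw [hderiv, hsq]
  have hDD2pos : (0:ℝ) < DD^2 := pow_pos hDpos 2
  constructor
  · rw [mul_div_assoc' (ε^2*L^2) _ (DD^2), le_div_iff₀ hDD2pos]
    have hlowbound : r1 * (n1 * (1/ε^2)) ≤
        (DD - (NN + DD)) * (NN' + DD') + (NN + DD) * NN' := by
      have h1 : 0 ≤ (DD - (NN + DD)) * (NN' + DD') :=
        mul_nonneg (by linarith) hS1
      have h2 : r1 * (n1 * (1/ε^2)) ≤ (NN + DD) * NN' :=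
        mul_le_mul hR1 hN1 (mul_nonneg hn1p.le (by positivity)) (by linarith)
      linarith
    calc Cone δ * DD^2 ≤ Cone δ * (d2*L)^2 := by
          apply mul_le_mul_of_nonneg_left _ hConep.le
          exact pow_le_pow_left₀ hDpos.le hD2' 2
      _ = (ε^2*L^2) * (r1 * (n1 * (1/ε^2))) := by
          rw [hConeEq]
          field_simp
      _ ≤ (ε^2*L^2) * ((DD - (NN + DD)) * (NN' + DD') + (NN + DD) * NN') := by
          apply mul_le_mul_of_nonneg_left hlowbound (by positivity)
      _ = (ε^2*L^2) * (NN' * DD - NN * DD') := by ring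
  · rw [mul_div_assoc' (ε^2*L^2) _ (DD^2), div_le_iff₀ hDD2pos]
    have hupbound : (DD - (NN + DD)) * (NN' + DD') + (NN + DD) * NN' ≤
        (d2*L) * (s2*L) + r2 * (n2 * (1/ε^2)) := by
      have h1 : (DD - (NN + DD)) * (NN' + DD') ≤ (d2*L) * (s2*L) := by
        apply mul_le_mul _ hS2' hS1 (by positivity)
        · linarith
      have h2 : (NN + DD) * NN' ≤ r2 * (n2 * (1/ε^2)) :=
        mul_le_mul hR2 hN2' hN'pos.le hr2p.le
      exact add_le_add h1 h2
    calc (ε^2*L^2) * (NN' * DD - NN * DD')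
        = (ε^2*L^2) * ((DD - (NN + DD)) * (NN' + DD') + (NN + DD) * NN') := by ring
      _ ≤ (ε^2*L^2) * ((d2*L) * (s2*L) + r2 * (n2 * (1/ε^2))) := by
          apply mul_le_mul_of_nonneg_left hupbound (by positivity)
      _ ≤ (d2 * s2 + r2 * n2) * L^2 := by
          have e2 : (ε^2*L^2) * (r2 * (n2 * (1/ε^2))) = r2 * n2 * L^2 := by
            field_simp
          have e1 : (ε^2*L^2) * ((d2*L) * (s2*L)) ≤ d2 * s2 * L^2 := by
            calc (ε^2*L^2) * ((d2*L) * (s2*L)) = (d2*s2*L^2) * (ε^2*L^2) := by ring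
              _ ≤ (d2*s2*L^2) * 1 := by
                  apply mul_le_mul_of_nonneg_left hT1
                  exact mul_nonneg (mul_nonneg hd2p.le hs2p.le) (sq_nonneg L)
              _ = d2*s2*L^2 := mul_one _
          calc (ε^2*L^2) * ((d2*L) * (s2*L) + r2 * (n2 * (1/ε^2)))
              = (ε^2*L^2) * ((d2*L) * (s2*L)) + (ε^2*L^2) * (r2 * (n2 * (1/ε^2))) := by ring
            _ ≤ d2 * s2 * L^2 + r2 * n2 * L^2 := by rw [e2]; linarith
            _ = (d2 * s2 + r2 * n2) * L^2 := by ring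
      _ = Ctwo δ * (d1*L)^2 := by
          rw [hCtwoEq]
          field_simp
      _ ≤ Ctwo δ * DD^2 := by
          apply mul_le_mul_of_nonneg_left _ hCtwop.le
          exact pow_le_pow_left₀ (mul_pos hd1p hLp).le hD1 2

end Final
end CdotAux

open CdotAux in
/-- `c'(α(ε)) → +∞` as `ε → 0⁺` at the rate `(ε log ε)^{−2}`,
where `α(ε) = −1 + δ(1 + ε²/2)`. -/
theorem cdot_divergence_rate (δ : ℝ) (hδ : δ ∈ Ioo (0 : ℝ) 1) :
    Tendsto (fun ε : ℝ => deriv (cpt δ) (-1 + δ * (1 + ε^2 / 2)))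
      (nhdsWithin 0 (Ioi 0)) atTop ∧
    ∃ C₁ C₂ : ℝ, 0 < C₁ ∧ 0 < C₂ ∧ ∃ ε₀ ∈ Ioo (0 : ℝ) 1, ∀ ε ∈ Ioo (0 : ℝ) ε₀,
      C₁ ≤ (ε * Real.log ε)^2 * deriv (cpt δ) (-1 + δ * (1 + ε^2 / 2)) ∧
      (ε * Real.log ε)^2 * deriv (cpt δ) (-1 + δ * (1 + ε^2 / 2)) ≤ C₂ := by
  obtain ⟨hδ0, hδ1⟩ := hδ
  have h1δ : (0:ℝ) < 1 - δ := by linarith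
  have hgd : (0:ℝ) < (1-δ)*δ := mul_pos h1δ hδ0
  have hs1 : 0 < Real.sqrt (2*δ) := Real.sqrt_pos.2 (by linarith)
  have hs2pos : 0 < Real.sqrt ((1-δ)*δ) := Real.sqrt_pos.2 hgd
  set r2d1 : ℝ := ((δ / Real.sqrt ((1-δ)*δ)) * (2*π)) / (Real.sqrt (2*δ))⁻¹ with hr2d1
  set ε₀ : ℝ := min (1/2) (min (Real.sqrt (1-δ)) (Real.exp (-r2d1))) with hε₀d
  have hε₀pos : 0 < ε₀ :=
    lt_min (by norm_num) (lt_min (Real.sqrt_pos.2 h1δ) (Real.exp_pos _))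
  have hε₀lt1 : ε₀ < 1 := lt_of_le_of_lt (min_le_left _ _) (by norm_num)
  have hyp : ∀ ε ∈ Ioo (0:ℝ) ε₀, 0 < ε ∧ ε ≤ 1/2 ∧ ε^2 ≤ 1-δ ∧
      (δ / Real.sqrt ((1-δ)*δ)) * (2*π) ≤ (Real.sqrt (2*δ))⁻¹ * (-Real.log ε) := by
    rintro ε ⟨h0, h1⟩
    have hεhalf : ε ≤ 1/2 := le_trans h1.le (min_le_left _ _)
    have hεsq : ε^2 ≤ 1 - δ := by
      have h2 : ε < Real.sqrt (1-δ) :=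
        lt_of_lt_of_le h1 (le_trans (min_le_right _ _) (min_le_left _ _))
      nlinarith [Real.sq_sqrt h1δ.le, Real.sqrt_nonneg (1-δ)]
    refine ⟨h0, hεhalf, hεsq, ?_⟩
    have h3 : ε < Real.exp (-r2d1) :=
      lt_of_lt_of_le h1 (le_trans (min_le_right _ _) (min_le_right _ _))
    have h4 : Real.log ε < -r2d1 := by
      have := Real.log_lt_log h0 h3
      rwa [Real.log_exp] at this
    rw [hr2d1] at h4
    have hd1p : (0:ℝ) < (Real.sqrt (2*δ))⁻¹ := inv_pos.2 hs1
    have h5 : (δ / Real.sqrt ((1-δ)*δ)) * (2*π) / (Real.sqrt (2*δ))⁻¹ < -Real.log ε := by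
      linarith
    rw [div_lt_iff₀ hd1p] at h5
    have hcomm : -Real.log ε * (Real.sqrt (2*δ))⁻¹ = (Real.sqrt (2*δ))⁻¹ * -Real.log ε :=
      mul_comm _ _
    linarith
  have hsandwich : ∀ ε ∈ Ioo (0:ℝ) ε₀,
      Cone δ ≤ (ε * Real.log ε)^2 * deriv (cpt δ) (-1 + δ*(1+ε^2/2)) ∧
      (ε * Real.log ε)^2 * deriv (cpt δ) (-1 + δ*(1+ε^2/2)) ≤ Ctwo δ := by
    intro ε hε
    obtain ⟨h0, hhalf, hsq, hR⟩ := hyp ε hε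
    exact deriv_sandwich ⟨hδ0, hδ1⟩ h0 hhalf hsq hR
  constructor
  · -- Tendsto atTop
    have hP2tendsto : Tendsto (fun ε : ℝ => (ε * Real.log ε)^2) (nhdsWithin 0 (Ioi 0))
        (nhdsWithin 0 (Ioi 0)) := by
      rw [tendsto_nhdsWithin_iff]
      constructor
      · have h := tendsto_log_mul_rpow_nhdsGT_zero (one_pos (α := ℝ))
        have h' : Tendsto (fun x : ℝ => x * Real.log x) (nhdsWithin 0 (Ioi 0)) (nhds 0) := by
          have heq : (fun x : ℝ => Real.log x * x ^ (1:ℝ)) = fun x : ℝ => x * Real.log x := by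
            funext x
            rw [Real.rpow_one, mul_comm]
          rw [heq] at h
          exact h
        have h2 := h'.pow 2
        norm_num at h2
        convert h2 using 2
      · filter_upwards [Ioo_mem_nhdsGT_of_mem (show (0:ℝ) ∈ Ico (0:ℝ) (1/2) by
          constructor <;> norm_num)] with ε hε
        obtain ⟨h0, h1⟩ := hε
        have hlogneg : Real.log ε < 0 := Real.log_neg h0 (by linarith)
        have hne : ε * Real.log ε ≠ 0 := ne_of_lt (mul_neg_of_pos_of_neg h0 hlogneg)
        exact mem_Ioi.2 (lt_of_le_of_ne (sq_nonneg _) (Ne.symm (pow_ne_zero 2 hne)))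
    have hmain : Tendsto (fun ε : ℝ => Cone δ * (((ε * Real.log ε)^2)⁻¹))
        (nhdsWithin 0 (Ioi 0)) atTop := by
      apply Filter.Tendsto.const_mul_atTop (Cone_pos ⟨hδ0, hδ1⟩)
      exact tendsto_inv_nhdsGT_zero.comp hP2tendsto
    apply tendsto_atTop_mono' _ _ hmain
    filter_upwards [Ioo_mem_nhdsGT_of_mem (show (0:ℝ) ∈ Ico (0:ℝ) ε₀ from
      ⟨le_refl 0, hε₀pos⟩)] with ε hε
    obtain ⟨hlow, _⟩ := hsandwich ε hε
    obtain ⟨h0, h1⟩ := hε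
    have hlogneg : Real.log ε < 0 := Real.log_neg h0 (by
      calc ε < ε₀ := h1
        _ < 1 := hε₀lt1)
    have hne : ε * Real.log ε ≠ 0 := ne_of_lt (mul_neg_of_pos_of_neg h0 hlogneg)
    have hP : 0 < (ε * Real.log ε)^2 :=
      lt_of_le_of_ne (sq_nonneg _) (Ne.symm (pow_ne_zero 2 hne))
    calc Cone δ * (((ε * Real.log ε)^2)⁻¹) = Cone δ / (ε * Real.log ε)^2 :=
          (div_eq_mul_inv _ _).symm
      _ ≤ deriv (cpt δ) (-1 + δ*(1+ε^2/2)) := by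
          rw [div_le_iff₀ hP]
          nlinarith [hlow]
  · exact ⟨Cone δ, Ctwo δ, Cone_pos ⟨hδ0, hδ1⟩, Ctwo_pos ⟨hδ0, hδ1⟩, ε₀,
      ⟨hε₀pos, hε₀lt1⟩, fun ε hε => hsandwich ε hε⟩
end

section
/- Let δ ∈ (0,1), define v(α) = ∫₀^π (1 − (α − δ·cos φ)²)^{−1/2} dφ for α ∈ (δ−1, 1−δ), and set α(ε) = −1 + δ(1 + ε²/2). Then there exist constants C₁, C₂ > 0 and ε₀ ∈ (0,1) such that C₁·log(1/ε) ≤ v(α(ε)) ≤ C₂·log(1/ε) for all ε ∈ (0, ε₀); in particular v(α(ε)) → +∞ as ε → 0⁺. -/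
open MeasureTheory Set Filter Real

/-- The elliptic-type integral `v(α) = ∫₀^π dφ/√(1−(α−δcos φ)²)`. -/
noncomputable def vInt (δ α : ℝ) : ℝ :=
  ∫ φ in (0 : ℝ)..Real.pi, 1 / Real.sqrt (1 - (α - δ * Real.cos φ)^2)

set_option maxHeartbeats 1000000 in
lemma v_key (δ ε : ℝ) (hδ0 : 0 < δ) (hδ1 : δ < 1) (hε0 : 0 < ε)
    (hε1 : ε ≤ 1/100) (hε2 : ε^2 ≤ 1 - δ) :
    (1 / (Real.sqrt 2 * Real.sqrt δ)) * Real.log (1 / ε)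
      ≤ vInt δ (-1 + δ * (1 + ε^2 / 2)) ∧
    vInt δ (-1 + δ * (1 + ε^2 / 2))
      ≤ (2 / Real.sqrt (δ * (1 - δ) * (2 / Real.pi ^ 2))) * Real.log (1 / ε) := by
  have hπ := Real.pi_pos
  have hπ4 : Real.pi < 3.15 := Real.pi_lt_d2
  have hπ2 := Real.two_le_pi
  set α : ℝ := -1 + δ * (1 + ε^2/2) with hα
  set K : ℝ := δ * (1 - δ) * (2 / Real.pi ^ 2) with hK
  have hKpos : 0 < K := by
    apply mul_pos (mul_pos hδ0 (by linarith)); positivity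
  have hεπ : ε ≤ Real.pi := by linarith
  have hfac : ∀ φ : ℝ, 1 - (α - δ * Real.cos φ)^2
      = δ * (1 - Real.cos φ + ε^2/2) * (2 - δ - δ * ε^2/2 + δ * Real.cos φ) := by
    intro φ; rw [hα]; ring
  have hbound : ∀ φ ∈ Icc (0:ℝ) Real.pi,
      K * (φ^2 + ε^2) ≤ 1 - (α - δ * Real.cos φ)^2 ∧
      1 - (α - δ * Real.cos φ)^2 ≤ δ * (φ^2 + ε^2) := by
    intro φ hφ
    have hc1 : Real.cos φ ≤ 1 := Real.cos_le_one φ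
    have hc2 : -1 ≤ Real.cos φ := Real.neg_one_le_cos φ
    have habs : |φ| ≤ Real.pi := by
      rw [abs_le]; constructor <;> [linarith [hφ.1]; exact hφ.2]
    have hcu : Real.cos φ ≤ 1 - 2 / Real.pi ^ 2 * φ ^ 2 :=
      Real.cos_le_one_sub_mul_cos_sq habs
    have hcl : 1 - φ^2/2 ≤ Real.cos φ := Real.one_sub_sq_div_two_le_cos
    rw [hfac]
    constructor
    · have hA : 2 / Real.pi ^ 2 * (φ^2 + ε^2) ≤ 1 - Real.cos φ + ε^2/2 := by
        have h1 : 2 / Real.pi ^ 2 ≤ 1/2 := by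
          rw [div_le_div_iff₀ (by positivity) (by norm_num)]
          nlinarith
        nlinarith [sq_nonneg ε]
      have hB : 1 - δ ≤ 2 - δ - δ * ε^2/2 + δ * Real.cos φ := by nlinarith
      calc K * (φ^2 + ε^2) = δ * (2 / Real.pi ^ 2 * (φ^2 + ε^2)) * (1 - δ) := by
            rw [hK]; ring
        _ ≤ δ * (1 - Real.cos φ + ε^2/2) * (2 - δ - δ * ε^2/2 + δ * Real.cos φ) := by
            apply mul_le_mul
            · exact mul_le_mul_of_nonneg_left hA hδ0.le
            · exact hB
            · linarith
            · apply mul_nonneg hδ0.le; nlinarith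
    · have hA : 1 - Real.cos φ + ε^2/2 ≤ (φ^2 + ε^2)/2 := by nlinarith
      have hB : 2 - δ - δ * ε^2/2 + δ * Real.cos φ ≤ 2 := by nlinarith
      calc δ * (1 - Real.cos φ + ε^2/2) * (2 - δ - δ * ε^2/2 + δ * Real.cos φ)
          ≤ δ * ((φ^2 + ε^2)/2) * 2 := by
            apply mul_le_mul
            · exact mul_le_mul_of_nonneg_left hA hδ0.le
            · exact hB
            · nlinarith
            · positivity
        _ = δ * (φ^2 + ε^2) := by ring
  have hpos : ∀ φ ∈ Icc (0:ℝ) Real.pi, 0 < 1 - (α - δ * Real.cos φ)^2 := by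
    intro φ hφ
    have h1 : 0 < K * (φ^2 + ε^2) := by positivity
    linarith [(hbound φ hφ).1]
  set f : ℝ → ℝ := fun φ => 1 / Real.sqrt (1 - (α - δ * Real.cos φ)^2) with hf
  set g : ℝ → ℝ := fun φ => 1 / Real.sqrt (φ^2 + ε^2) with hg
  have hflow : ∀ φ ∈ Icc (0:ℝ) Real.pi, (1 / Real.sqrt δ) * g φ ≤ f φ := by
    intro φ hφ
    have h1 : Real.sqrt (1 - (α - δ * Real.cos φ)^2) ≤ Real.sqrt (δ * (φ^2 + ε^2)) :=
      Real.sqrt_le_sqrt (hbound φ hφ).2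
    have h2 : 0 < Real.sqrt (1 - (α - δ * Real.cos φ)^2) :=
      Real.sqrt_pos.2 (hpos φ hφ)
    have h3 := one_div_le_one_div_of_le h2 h1
    calc (1 / Real.sqrt δ) * g φ = 1 / Real.sqrt (δ * (φ^2 + ε^2)) := by
          rw [hg, Real.sqrt_mul hδ0.le]; field_simp
      _ ≤ f φ := h3
  have hfup : ∀ φ ∈ Icc (0:ℝ) Real.pi, f φ ≤ (1 / Real.sqrt K) * g φ := by
    intro φ hφ
    have h1 : Real.sqrt (K * (φ^2 + ε^2)) ≤ Real.sqrt (1 - (α - δ * Real.cos φ)^2) :=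
      Real.sqrt_le_sqrt (hbound φ hφ).1
    have h2 : 0 < Real.sqrt (K * (φ^2 + ε^2)) :=
      Real.sqrt_pos.2 (by positivity)
    have h3 := one_div_le_one_div_of_le h2 h1
    calc f φ ≤ 1 / Real.sqrt (K * (φ^2 + ε^2)) := h3
      _ = (1 / Real.sqrt K) * g φ := by
          rw [hg, Real.sqrt_mul hKpos.le]; field_simp
  -- integrability
  have hcont : Continuous fun φ : ℝ => 1 - (α - δ * Real.cos φ)^2 :=
    continuous_const.sub (((continuous_const.sub
      (continuous_const.mul Real.continuous_cos)).pow 2))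
  have hfc : IntervalIntegrable f volume 0 Real.pi := by
    apply ContinuousOn.intervalIntegrable
    rw [uIcc_of_le hπ.le]
    apply ContinuousOn.div continuousOn_const
      (Real.continuous_sqrt.comp hcont).continuousOn
    intro x hx
    exact (Real.sqrt_pos.2 (hpos x hx)).ne'
  have hgc : Continuous g := by
    apply Continuous.div continuous_const
      (Real.continuous_sqrt.comp (by fun_prop))
    intro x
    have : 0 < x^2 + ε^2 := by positivity
    exact (Real.sqrt_pos.2 this).ne'
  have hgi : ∀ a b : ℝ, IntervalIntegrable g volume a b := fun a b =>
    hgc.intervalIntegrable a b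
  have hgnn : ∀ x, 0 ≤ g x := by
    intro x; rw [hg]; positivity
  have hsplit : (∫ φ in (0:ℝ)..ε, g φ) + ∫ φ in ε..Real.pi, g φ
      = ∫ φ in (0:ℝ)..Real.pi, g φ :=
    intervalIntegral.integral_add_adjacent_intervals (hgi 0 ε) (hgi ε Real.pi)
  have hlogε : 0 < Real.log (1/ε) := by
    apply Real.log_pos
    rw [lt_div_iff₀ hε0]; linarith
  -- lower bound on ∫ g
  have hIlow : (1 / Real.sqrt 2) * Real.log (1/ε) ≤ ∫ φ in (0:ℝ)..Real.pi, g φ := by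
    have h1 : 0 ≤ ∫ φ in (0:ℝ)..ε, g φ :=
      intervalIntegral.integral_nonneg hε0.le (fun x _ => hgnn x)
    have h2 : ∫ φ in ε..Real.pi, (1 / Real.sqrt 2) * (1/φ) ≤ ∫ φ in ε..Real.pi, g φ := by
      apply intervalIntegral.integral_mono_on hεπ
      · apply ContinuousOn.intervalIntegrable
        apply ContinuousOn.mul continuousOn_const
        apply ContinuousOn.div continuousOn_const continuousOn_id
        intro x hx
        rw [uIcc_of_le hεπ] at hx
        exact (lt_of_lt_of_le hε0 hx.1).ne'
      · exact hgi ε Real.pi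
      · intro x hx
        have hx0 : 0 < x := lt_of_lt_of_le hε0 hx.1
        have h3 : Real.sqrt (x^2 + ε^2) ≤ Real.sqrt 2 * x := by
          rw [show Real.sqrt 2 * x = Real.sqrt (2 * x^2) by
            rw [Real.sqrt_mul (by norm_num), Real.sqrt_sq hx0.le]]
          apply Real.sqrt_le_sqrt; nlinarith [hx.1, sq_nonneg x]
        have h4 : 0 < Real.sqrt (x^2 + ε^2) := Real.sqrt_pos.2 (by positivity)
        have h5 := one_div_le_one_div_of_le h4 h3
        calc (1 / Real.sqrt 2) * (1/x) = 1 / (Real.sqrt 2 * x) := by field_simp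
          _ ≤ g x := h5
    have h6 : ∫ φ in ε..Real.pi, (1 / Real.sqrt 2) * (1/φ)
        = (1 / Real.sqrt 2) * Real.log (Real.pi / ε) := by
      rw [intervalIntegral.integral_const_mul, integral_one_div]
      intro h
      rw [uIcc_of_le hεπ] at h
      exact absurd h.1 (not_le.2 hε0)
    have h7 : Real.log (1/ε) ≤ Real.log (Real.pi / ε) := by
      apply Real.log_le_log (by positivity)
      gcongr
      linarith
    have h8 : (1 / Real.sqrt 2) * Real.log (1/ε)
        ≤ (1 / Real.sqrt 2) * Real.log (Real.pi / ε) := by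
      apply mul_le_mul_of_nonneg_left h7; positivity
    linarith [hsplit, h2, h6 ▸ h2]
  -- upper bound on ∫ g
  have hIup : (∫ φ in (0:ℝ)..Real.pi, g φ) ≤ 2 * Real.log (1/ε) := by
    have h1 : (∫ φ in (0:ℝ)..ε, g φ) ≤ ∫ φ in (0:ℝ)..ε, (1/ε : ℝ) := by
      apply intervalIntegral.integral_mono_on hε0.le (hgi 0 ε)
        intervalIntegrable_const
      intro x hx
      have h3 : ε ≤ Real.sqrt (x^2 + ε^2) :=
        (Real.le_sqrt hε0.le (by positivity)).2 (by nlinarith [sq_nonneg x])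
      exact one_div_le_one_div_of_le hε0 h3
    have h1' : (∫ φ in (0:ℝ)..ε, (1/ε : ℝ)) = 1 := by
      simp [intervalIntegral.integral_const]
      field_simp
    have h2 : (∫ φ in ε..Real.pi, g φ) ≤ ∫ φ in ε..Real.pi, 1/φ := by
      apply intervalIntegral.integral_mono_on hεπ (hgi ε Real.pi)
      · apply ContinuousOn.intervalIntegrable
        apply ContinuousOn.div continuousOn_const continuousOn_id
        intro x hx
        rw [uIcc_of_le hεπ] at hx
        exact (lt_of_lt_of_le hε0 hx.1).ne'
      · intro x hx
        have hx0 : 0 < x := lt_of_lt_of_le hε0 hx.1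
        have h3 : x ≤ Real.sqrt (x^2 + ε^2) :=
          (Real.le_sqrt hx0.le (by positivity)).2 (by nlinarith [sq_nonneg ε])
        exact one_div_le_one_div_of_le hx0 h3
    have h2' : (∫ φ in ε..Real.pi, (1:ℝ)/φ) = Real.log (Real.pi / ε) := by
      apply integral_one_div
      intro h
      rw [uIcc_of_le hεπ] at h
      exact absurd h.1 (not_le.2 hε0)
    have hlog100 : (4:ℝ) ≤ Real.log 100 := by
      rw [Real.le_log_iff_exp_le (by norm_num)]
      have h := Real.exp_one_lt_d9
      have hp := Real.exp_pos 1
      calc Real.exp 4 = Real.exp 1 * Real.exp 1 * Real.exp 1 * Real.exp 1 := by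
            rw [← Real.exp_add, ← Real.exp_add, ← Real.exp_add]; norm_num
        _ ≤ 100 := by
            have h2 : Real.exp 1 * Real.exp 1 ≤ 7.39 := by nlinarith
            nlinarith
    have hl100 : Real.log 100 ≤ Real.log (1/ε) := by
      apply Real.log_le_log (by norm_num)
      rw [le_div_iff₀ hε0]; linarith
    have hlogπ : Real.log Real.pi ≤ Real.pi - 1 :=
      Real.log_le_sub_one_of_pos hπ
    have hπε : Real.log (Real.pi / ε) = Real.log Real.pi + Real.log (1/ε) := by
      rw [Real.log_div hπ.ne' hε0.ne', Real.log_div one_ne_zero hε0.ne', Real.log_one]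
      ring
    linarith [hsplit, h1, h1' ▸ h1, h2' ▸ h2]
  -- conclude
  have hv : vInt δ α = ∫ φ in (0:ℝ)..Real.pi, f φ := rfl
  have hIcm : ∀ c : ℝ, (∫ φ in (0:ℝ)..Real.pi, c * g φ)
      = c * ∫ φ in (0:ℝ)..Real.pi, g φ := fun c =>
    intervalIntegral.integral_const_mul c g
  constructor
  · have hmono1 : (∫ φ in (0:ℝ)..Real.pi, (1 / Real.sqrt δ) * g φ)
        ≤ ∫ φ in (0:ℝ)..Real.pi, f φ :=
      intervalIntegral.integral_mono_on hπ.le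
        ((continuous_const.mul hgc).intervalIntegrable 0 Real.pi) hfc hflow
    calc (1 / (Real.sqrt 2 * Real.sqrt δ)) * Real.log (1/ε)
        = (1 / Real.sqrt δ) * ((1 / Real.sqrt 2) * Real.log (1/ε)) := by ring
      _ ≤ (1 / Real.sqrt δ) * ∫ φ in (0:ℝ)..Real.pi, g φ := by
          apply mul_le_mul_of_nonneg_left hIlow; positivity
      _ = ∫ φ in (0:ℝ)..Real.pi, (1 / Real.sqrt δ) * g φ := (hIcm _).symm
      _ ≤ vInt δ α := hmono1
  · have hmono2 : (∫ φ in (0:ℝ)..Real.pi, f φ)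
        ≤ ∫ φ in (0:ℝ)..Real.pi, (1 / Real.sqrt K) * g φ :=
      intervalIntegral.integral_mono_on hπ.le hfc
        ((continuous_const.mul hgc).intervalIntegrable 0 Real.pi) hfup
    calc vInt δ α ≤ ∫ φ in (0:ℝ)..Real.pi, (1 / Real.sqrt K) * g φ := hmono2
      _ = (1 / Real.sqrt K) * ∫ φ in (0:ℝ)..Real.pi, g φ := hIcm _
      _ ≤ (1 / Real.sqrt K) * (2 * Real.log (1/ε)) := by
          apply mul_le_mul_of_nonneg_left hIup; positivity
      _ = (2 / Real.sqrt K) * Real.log (1/ε) := by ring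


/-- `v(α(ε)) ≍ log(1/ε)` as `ε → 0⁺`, where `α(ε) = −1 + δ(1+ε²/2)`;
in particular `v(α(ε)) → +∞`. -/
theorem v_integral_log_rate (δ : ℝ) (hδ : δ ∈ Ioo (0 : ℝ) 1) :
    (∃ C₁ C₂ : ℝ, 0 < C₁ ∧ 0 < C₂ ∧ ∃ ε₀ ∈ Ioo (0 : ℝ) 1, ∀ ε ∈ Ioo (0 : ℝ) ε₀,
      C₁ * Real.log (1 / ε) ≤ vInt δ (-1 + δ * (1 + ε^2 / 2)) ∧
      vInt δ (-1 + δ * (1 + ε^2 / 2)) ≤ C₂ * Real.log (1 / ε)) ∧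
    Tendsto (fun ε : ℝ => vInt δ (-1 + δ * (1 + ε^2 / 2)))
      (nhdsWithin 0 (Ioi 0)) atTop := by
  obtain ⟨hδ0, hδ1⟩ := hδ
  have hπ := Real.pi_pos
  set ε₀ : ℝ := min (1/100) (Real.sqrt (1 - δ)) with hε₀
  have hε₀pos : 0 < ε₀ := lt_min (by norm_num) (Real.sqrt_pos.2 (by linarith))
  have hε₀lt1 : ε₀ < 1 := lt_of_le_of_lt (min_le_left _ _) (by norm_num)
  have hmain : ∀ ε ∈ Ioo (0:ℝ) ε₀,
      (1 / (Real.sqrt 2 * Real.sqrt δ)) * Real.log (1 / ε)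
        ≤ vInt δ (-1 + δ * (1 + ε^2 / 2)) ∧
      vInt δ (-1 + δ * (1 + ε^2 / 2))
        ≤ (2 / Real.sqrt (δ * (1 - δ) * (2 / Real.pi ^ 2))) * Real.log (1 / ε) := by
    rintro ε ⟨h1, h2⟩
    have hεa : ε ≤ 1/100 := le_of_lt (lt_of_lt_of_le h2 (min_le_left _ _))
    have hεb : ε^2 ≤ 1 - δ := by
      have h3 : ε < Real.sqrt (1 - δ) := lt_of_lt_of_le h2 (min_le_right _ _)
      nlinarith [Real.sq_sqrt (show (0:ℝ) ≤ 1 - δ by linarith),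
        Real.sqrt_nonneg (1 - δ)]
    exact v_key δ ε hδ0 hδ1 h1 hεa hεb
  have hKpos : 0 < δ * (1 - δ) * (2 / Real.pi ^ 2) :=
    mul_pos (mul_pos hδ0 (by linarith)) (by positivity)
  have hC1 : 0 < 1 / (Real.sqrt 2 * Real.sqrt δ) := by positivity
  refine ⟨⟨_, _, hC1, ?_, ε₀, ⟨hε₀pos, hε₀lt1⟩, hmain⟩, ?_⟩
  · have := Real.sqrt_pos.2 hKpos; positivity
  · have htl : Tendsto (fun ε : ℝ =>
        (1 / (Real.sqrt 2 * Real.sqrt δ)) * Real.log (1 / ε))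
        (nhdsWithin 0 (Ioi 0)) atTop := by
      have h : Tendsto (fun ε : ℝ => Real.log (1 / ε))
          (nhdsWithin 0 (Ioi 0)) atTop := by
        exact (Real.tendsto_log_atTop.comp tendsto_inv_nhdsGT_zero).congr
          (fun x => by simp [Function.comp, one_div])
      exact h.const_mul_atTop hC1
    apply tendsto_atTop_mono' _ _ htl
    filter_upwards [Ioo_mem_nhdsGT_of_mem (by exact ⟨le_refl (0:ℝ), hε₀pos⟩)] with ε hε
    exact (hmain ε hε).1
end

section
/- Let δ ∈ (0,1), α ∈ (δ−1, 1−δ), and write ξ(φ) = α − δ·cos φ. Define u(α) = ∫₀^π cos φ·(1−ξ(φ)²)^{−1/2} dφ, v(α) = ∫₀^π (1−ξ(φ)²)^{−1/2} dφ, I₁(α) = ∫₀^π ξ(φ)·((1−ξ(φ))·√(1−ξ(φ)²))^{−1} dφ, I₂(α) = ∫₀^π ξ(φ)·(1−ξ(φ)²)^{−3/2} dφ, and I₃(α) = ∫₀^π √((1+ξ(φ))/(1−ξ(φ))) dφ. Then c(α) = α − δ·u(α)/v(α), c is differentiable, and c'(α) = 1 + (I₁(α)·v(α) − I₂(α)·I₃(α))/v(α)².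 -/
open MeasureTheory Set Filter Real Topology

set_option maxHeartbeats 1000000

lemma subst_lemma (δ α : ℝ) (hδ0 : 0 < δ) (hα1 : δ - 1 < α) (hα2 : α < 1 - δ) (g : ℝ → ℝ) :
    (∫ ξ in (α - δ)..(α + δ), g ξ / Real.sqrt ((1 - ξ^2) * (ξ - (α - δ)) * ((α + δ) - ξ))) =
    ∫ φ in (0:ℝ)..Real.pi, g (α - δ * Real.cos φ) / Real.sqrt (1 - (α - δ * Real.cos φ)^2) := by
  have hπ : (0:ℝ) < Real.pi := Real.pi_pos
  set f : ℝ → ℝ := fun φ => α - δ * Real.cos φ with hf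
  have hmono : StrictMonoOn f (Icc 0 Real.pi) := by
    intro x hx y hy hxy
    have := Real.strictAntiOn_cos hx hy hxy
    simp only [hf]
    nlinarith
  have hinj : InjOn f (Ioo 0 Real.pi) := (hmono.injOn).mono Ioo_subset_Icc_self
  have hxi : ∀ φ : ℝ, -1 < α - δ * Real.cos φ ∧ α - δ * Real.cos φ < 1 := by
    intro φ
    have h1 := Real.cos_le_one φ
    have h2 := Real.neg_one_le_cos φ
    constructor <;> nlinarith
  have himg : f '' Ioo 0 Real.pi = Ioo (α - δ) (α + δ) := by
    apply Subset.antisymm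
    · rintro _ ⟨φ, hφ, rfl⟩
      have h1 : Real.cos φ < 1 := by
        have := Real.cos_lt_cos_of_nonneg_of_le_pi le_rfl hφ.2.le hφ.1
        simpa using this
      have h2 : -1 < Real.cos φ := by
        have := Real.cos_lt_cos_of_nonneg_of_le_pi hφ.1.le le_rfl hφ.2
        simpa using this
      constructor <;> (simp only [hf]; nlinarith)
    · rintro x ⟨hx1, hx2⟩
      refine ⟨Real.arccos ((α - x) / δ), ⟨?_, ?_⟩, ?_⟩
      · apply Real.arccos_pos.mpr
        rw [div_lt_one hδ0]
        linarith
      · rcases lt_or_eq_of_le (Real.arccos_le_pi ((α - x) / δ)) with h | h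
        · exact h
        · exfalso
          have := Real.arccos_eq_pi.mp h
          rw [div_le_iff₀ hδ0] at this
          linarith
      · simp only [hf]
        rw [Real.cos_arccos]
        · field_simp; ring
        · rw [le_div_iff₀ hδ0]; linarith
        · rw [div_le_iff₀ hδ0]; linarith
  have hderiv : ∀ φ ∈ Ioo 0 Real.pi,
      HasDerivWithinAt f (δ * Real.sin φ) (Ioo 0 Real.pi) φ := by
    intro φ _
    have : HasDerivAt f (δ * Real.sin φ) φ := by
      simpa [hf] using ((Real.hasDerivAt_cos φ).const_mul δ).const_sub α
    exact this.hasDerivWithinAt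
  have hab : α - δ ≤ α + δ := by linarith
  have key := integral_image_eq_integral_abs_deriv_smul measurableSet_Ioo hderiv hinj
      (fun ξ => g ξ / Real.sqrt ((1 - ξ^2) * (ξ - (α - δ)) * ((α + δ) - ξ)))
  rw [himg] at key
  rw [intervalIntegral.integral_of_le hab, intervalIntegral.integral_of_le hπ.le,
    integral_Ioc_eq_integral_Ioo, integral_Ioc_eq_integral_Ioo, key]
  apply setIntegral_congr_fun measurableSet_Ioo
  intro φ hφ
  have hsin : 0 < Real.sin φ := Real.sin_pos_of_pos_of_lt_pi hφ.1 hφ.2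
  set ξ := α - δ * Real.cos φ with hξ
  have hξ2 : 0 < 1 - ξ^2 := by
    obtain ⟨h1, h2⟩ := hxi φ
    nlinarith
  have hrad : (1 - ξ^2) * (ξ - (α - δ)) * ((α + δ) - ξ) = (1 - ξ^2) * (δ * Real.sin φ)^2 := by
    have hsc := Real.sin_sq_add_cos_sq φ
    simp only [hξ]
    linear_combination (-(1 - (α - δ * Real.cos φ)^2) * δ^2) * hsc
  have hsqrt : Real.sqrt ((1 - ξ^2) * (δ * Real.sin φ)^2)
      = Real.sqrt (1 - ξ^2) * (δ * Real.sin φ) := by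
    rw [Real.sqrt_mul hξ2.le, Real.sqrt_sq (by positivity)]
  have hs0 : Real.sqrt (1 - ξ^2) ≠ 0 := by positivity
  have hds : δ * Real.sin φ ≠ 0 := by positivity
  simp only [hf, smul_eq_mul, ← hξ, hrad, hsqrt, abs_of_pos (by positivity : 0 < δ * Real.sin φ)]
  field_simp

lemma hasDerivAt_one_div_sqrt (c x : ℝ) (hx : 0 < 1 - (x - c)^2) :
    HasDerivAt (fun y => 1 / Real.sqrt (1 - (y - c)^2))
      ((x - c) / ((1 - (x - c)^2) * Real.sqrt (1 - (x - c)^2))) x := by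
  have h0 : HasDerivAt (fun y => 1 - (y - c)^2) (-(2 * (x - c))) x := by
    have h := (((hasDerivAt_id x).sub_const c).pow 2).const_sub 1
    refine h.congr_deriv ?_
    simp
  have hs := (Real.hasDerivAt_sqrt (ne_of_gt hx)).comp x h0
  have hsne : Real.sqrt (1 - (x - c)^2) ≠ 0 := by positivity
  have h2 := hs.inv hsne
  have hsq : Real.sqrt (1 - (x - c)^2) ^ 2 = 1 - (x - c)^2 := Real.sq_sqrt hx.le
  simp only [one_div]
  refine h2.congr_deriv ?_
  simp only [Function.comp]
  field_simp
  rw [hsq]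


lemma hasDerivAt_param (δ α : ℝ) (hδ0 : 0 < δ) (hα1 : δ - 1 < α) (hα2 : α < 1 - δ)
    (w : ℝ → ℝ) (hw : Continuous w) (hwb : ∀ φ, |w φ| ≤ 1) :
    HasDerivAt (fun x => ∫ φ in (0:ℝ)..Real.pi, w φ / Real.sqrt (1 - (x - δ * Real.cos φ)^2))
      (∫ φ in (0:ℝ)..Real.pi, w φ * ((α - δ * Real.cos φ) /
        ((1 - (α - δ * Real.cos φ)^2) * Real.sqrt (1 - (α - δ * Real.cos φ)^2)))) α := by
  set ε := (min (α - (δ - 1)) ((1 - δ) - α)) / 2 with hε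
  have hε0 : 0 < ε := by
    apply div_pos _ two_pos
    apply lt_min <;> linarith
  set m : ℝ := (1 - (α + δ + 1)/2) * (1 + (α - δ - 1)/2) with hm
  have hm0 : 0 < m := by
    apply mul_pos <;> linarith
  have hkey : ∀ x : ℝ, |x - α| < ε → ∀ φ : ℝ, m ≤ 1 - (x - δ * Real.cos φ)^2 := by
    intro x hx φ
    have h1 := Real.cos_le_one φ
    have h2 := Real.neg_one_le_cos φ
    rw [abs_lt] at hx
    have he1 : ε ≤ (α - (δ - 1)) / 2 := by
      rw [hε]; gcongr; exact min_le_left _ _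
    have he2 : ε ≤ ((1 - δ) - α) / 2 := by
      rw [hε]; gcongr; exact min_le_right _ _
    have hB : x - δ * Real.cos φ ≤ (α + δ + 1)/2 := by nlinarith
    have hA : (α - δ - 1)/2 ≤ x - δ * Real.cos φ := by nlinarith
    rw [hm]
    nlinarith
  have hkεm := hkey α (by simpa using hε0)
  have hsqm : ∀ x : ℝ, |x - α| < ε → ∀ φ : ℝ,
      m * Real.sqrt m ≤ (1 - (x - δ * Real.cos φ)^2) * Real.sqrt (1 - (x - δ * Real.cos φ)^2) := by
    intro x hx φ
    have h := hkey x hx φ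
    exact mul_le_mul h (Real.sqrt_le_sqrt h) (Real.sqrt_nonneg _) (by linarith)
  set C : ℝ := 1 / (m * Real.sqrt m) with hC
  have hcont : ∀ x : ℝ, Continuous fun φ : ℝ => 1 - (x - δ * Real.cos φ)^2 := fun x =>
    continuous_const.sub ((continuous_const.sub (continuous_const.mul Real.continuous_cos)).pow 2)
  have hconts : ∀ x : ℝ, Continuous fun φ : ℝ => Real.sqrt (1 - (x - δ * Real.cos φ)^2) := fun x =>
    Real.continuous_sqrt.comp (hcont x)
  have hms0 : 0 < m * Real.sqrt m := by positivity
  have hres := intervalIntegral.hasDerivAt_integral_of_dominated_loc_of_deriv_le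
    (F := fun x φ => w φ / Real.sqrt (1 - (x - δ * Real.cos φ)^2))
    (F' := fun x φ => w φ * ((x - δ * Real.cos φ) /
        ((1 - (x - δ * Real.cos φ)^2) * Real.sqrt (1 - (x - δ * Real.cos φ)^2))))
    (bound := fun _ => C) (a := 0) (b := Real.pi) (μ := volume) (x₀ := α) (Metric.ball_mem_nhds α hε0)
    ?_ ?_ ?_ ?_ ?_ ?_
  · exact hres.2
  · -- measurability of F x
    apply Eventually.of_forall
    intro x
    apply Measurable.aestronglyMeasurable
    exact hw.measurable.div (hconts x).measurable
  · -- integrability of F α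
    apply Continuous.intervalIntegrable
    apply hw.div (hconts α)
    intro φ
    exact (Real.sqrt_pos.mpr (lt_of_lt_of_le hm0 (hkεm φ))).ne'
  · -- measurability of F' α
    apply Measurable.aestronglyMeasurable
    apply hw.measurable.mul
    apply Measurable.div
    · exact (continuous_const.sub (continuous_const.mul Real.continuous_cos)).measurable
    · exact ((hcont α).mul (hconts α)).measurable
  · -- bound
    apply ae_of_all
    intro φ _ x hx
    rw [Metric.mem_ball, Real.dist_eq] at hx
    have hmle := hkey x hx φ
    have hsle := hsqm x hx φ
    have hξ1 : (x - δ * Real.cos φ)^2 ≤ 1 := by nlinarith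
    have habs : |x - δ * Real.cos φ| ≤ 1 := by
      rw [← Real.sqrt_one]
      rw [← Real.sqrt_sq_eq_abs]
      exact Real.sqrt_le_sqrt hξ1
    have hpos : (0:ℝ) < (1 - (x - δ * Real.cos φ)^2) * Real.sqrt (1 - (x - δ * Real.cos φ)^2) := by
      have h1 : 0 < 1 - (x - δ * Real.cos φ)^2 := lt_of_lt_of_le hm0 hmle
      positivity
    rw [norm_eq_abs, abs_mul, abs_div, abs_of_pos hpos, hC]
    calc |w φ| * (|x - δ * Real.cos φ| /
          ((1 - (x - δ * Real.cos φ)^2) * Real.sqrt (1 - (x - δ * Real.cos φ)^2)))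
        ≤ 1 * (1 / (m * Real.sqrt m)) := by
          apply mul_le_mul (hwb φ) _ (by positivity) zero_le_one
          apply div_le_div₀ zero_le_one habs hms0 hsle
      _ = 1 / (m * Real.sqrt m) := one_mul _
  · exact intervalIntegrable_const
  · -- differentiability
    apply ae_of_all
    intro φ _ x hx
    rw [Metric.mem_ball, Real.dist_eq] at hx
    have h : 0 < 1 - (x - δ * Real.cos φ)^2 := lt_of_lt_of_le hm0 (hkey x hx φ)
    have := (hasDerivAt_one_div_sqrt (δ * Real.cos φ) x h).const_mul (w φ)
    simp only [mul_one_div] at this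
    exact this

lemma xi_bounds (δ α : ℝ) (hδ0 : 0 < δ) (hα1 : δ - 1 < α) (hα2 : α < 1 - δ) (φ : ℝ) :
    0 < 1 - (α - δ * Real.cos φ)^2 := by
  have h1 := Real.cos_le_one φ
  have h2 := Real.neg_one_le_cos φ
  nlinarith [mul_pos (show (0:ℝ) < 1 - (α - δ * Real.cos φ) by nlinarith)
    (show (0:ℝ) < 1 + (α - δ * Real.cos φ) by nlinarith)]


lemma trig_rep (δ α : ℝ) (hδ0 : 0 < δ) (hα1 : δ - 1 < α) (hα2 : α < 1 - δ) :
    cpt δ α = α - δ *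
        (∫ φ in (0:ℝ)..Real.pi, Real.cos φ / Real.sqrt (1 - (α - δ * Real.cos φ)^2)) /
        (∫ φ in (0:ℝ)..Real.pi, 1 / Real.sqrt (1 - (α - δ * Real.cos φ)^2)) := by
  have hxi := xi_bounds δ α hδ0 hα1 hα2
  have hcont : Continuous fun φ : ℝ => 1 - (α - δ * Real.cos φ)^2 :=
    continuous_const.sub ((continuous_const.sub (continuous_const.mul Real.continuous_cos)).pow 2)
  have hconts : Continuous fun φ : ℝ => Real.sqrt (1 - (α - δ * Real.cos φ)^2) :=
    Real.continuous_sqrt.comp hcont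
  have hs0 : ∀ φ : ℝ, Real.sqrt (1 - (α - δ * Real.cos φ)^2) ≠ 0 :=
    fun φ => (Real.sqrt_pos.mpr (hxi φ)).ne'
  have hintV : IntervalIntegrable (fun φ => 1 / Real.sqrt (1 - (α - δ * Real.cos φ)^2))
      volume 0 Real.pi := (continuous_const.div hconts hs0).intervalIntegrable _ _
  have hintU : IntervalIntegrable (fun φ => Real.cos φ / Real.sqrt (1 - (α - δ * Real.cos φ)^2))
      volume 0 Real.pi := (Real.continuous_cos.div hconts hs0).intervalIntegrable _ _
  have hV0 : 0 < ∫ φ in (0:ℝ)..Real.pi, 1 / Real.sqrt (1 - (α - δ * Real.cos φ)^2) := by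
    apply intervalIntegral.intervalIntegral_pos_of_pos hintV _ Real.pi_pos
    intro φ
    have := Real.sqrt_pos.mpr (hxi φ)
    positivity
  have h1 := subst_lemma δ α hδ0 hα1 hα2 (fun ξ => ξ)
  have h2 := subst_lemma δ α hδ0 hα1 hα2 (fun _ => 1)
  rw [cpt, h1, h2]
  have hnum : (∫ φ in (0:ℝ)..Real.pi, (α - δ * Real.cos φ) / Real.sqrt (1 - (α - δ * Real.cos φ)^2))
      = α * (∫ φ in (0:ℝ)..Real.pi, 1 / Real.sqrt (1 - (α - δ * Real.cos φ)^2))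
        - δ * ∫ φ in (0:ℝ)..Real.pi, Real.cos φ / Real.sqrt (1 - (α - δ * Real.cos φ)^2) := by
    rw [← intervalIntegral.integral_const_mul, ← intervalIntegral.integral_const_mul,
      ← intervalIntegral.integral_sub (hintV.const_mul α) (hintU.const_mul δ)]
    apply intervalIntegral.integral_congr
    intro φ _
    ring
  rw [hnum]
  field_simp


/-- trigonometric representation of `c(α)` and the formula
`c'(α) = 1 + (I₁ v − I₂ I₃)/v²`. -/
theorem cpt_trig_representation_and_derivative (δ α : ℝ) (hδ : δ ∈ Ioo (0 : ℝ) 1)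
    (hα : α ∈ Ioo (δ - 1) (1 - δ)) :
    cpt δ α = α - δ *
        (∫ φ in (0 : ℝ)..Real.pi, Real.cos φ / Real.sqrt (1 - (α - δ * Real.cos φ)^2)) /
        (∫ φ in (0 : ℝ)..Real.pi, 1 / Real.sqrt (1 - (α - δ * Real.cos φ)^2)) ∧
    DifferentiableAt ℝ (cpt δ) α ∧
    deriv (cpt δ) α = 1 +
      ((∫ φ in (0 : ℝ)..Real.pi, (α - δ * Real.cos φ) /
            ((1 - (α - δ * Real.cos φ)) * Real.sqrt (1 - (α - δ * Real.cos φ)^2))) *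
          (∫ φ in (0 : ℝ)..Real.pi, 1 / Real.sqrt (1 - (α - δ * Real.cos φ)^2)) -
        (∫ φ in (0 : ℝ)..Real.pi, (α - δ * Real.cos φ) /
            ((1 - (α - δ * Real.cos φ)^2) * Real.sqrt (1 - (α - δ * Real.cos φ)^2))) *
          (∫ φ in (0 : ℝ)..Real.pi,
            Real.sqrt ((1 + (α - δ * Real.cos φ)) / (1 - (α - δ * Real.cos φ))))) /
      (∫ φ in (0 : ℝ)..Real.pi, 1 / Real.sqrt (1 - (α - δ * Real.cos φ)^2))^2 := by
  obtain ⟨hδ0, hδ1⟩ := hδ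
  obtain ⟨hα1, hα2⟩ := hα
  have hxi := xi_bounds δ α hδ0 hα1 hα2
  have hxiB : ∀ φ : ℝ, -1 < α - δ * Real.cos φ ∧ α - δ * Real.cos φ < 1 := by
    intro φ
    have := hxi φ
    constructor <;> nlinarith
  -- continuity facts at α
  have hcont : Continuous fun φ : ℝ => 1 - (α - δ * Real.cos φ)^2 :=
    continuous_const.sub ((continuous_const.sub (continuous_const.mul Real.continuous_cos)).pow 2)
  have hconts : Continuous fun φ : ℝ => Real.sqrt (1 - (α - δ * Real.cos φ)^2) :=
    Real.continuous_sqrt.comp hcont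
  have hs0 : ∀ φ : ℝ, Real.sqrt (1 - (α - δ * Real.cos φ)^2) ≠ 0 :=
    fun φ => (Real.sqrt_pos.mpr (hxi φ)).ne'
  have hintV : IntervalIntegrable (fun φ => 1 / Real.sqrt (1 - (α - δ * Real.cos φ)^2))
      volume 0 Real.pi := (continuous_const.div hconts hs0).intervalIntegrable _ _
  have hintU : IntervalIntegrable (fun φ => Real.cos φ / Real.sqrt (1 - (α - δ * Real.cos φ)^2))
      volume 0 Real.pi := (Real.continuous_cos.div hconts hs0).intervalIntegrable _ _
  have hV0 : 0 < ∫ φ in (0:ℝ)..Real.pi, 1 / Real.sqrt (1 - (α - δ * Real.cos φ)^2) := by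
    apply intervalIntegral.intervalIntegral_pos_of_pos hintV _ Real.pi_pos
    intro φ
    have := Real.sqrt_pos.mpr (hxi φ)
    positivity
  set V : ℝ → ℝ := fun x => ∫ φ in (0:ℝ)..Real.pi, 1 / Real.sqrt (1 - (x - δ * Real.cos φ)^2)
    with hVdef
  set U : ℝ → ℝ := fun x =>
    ∫ φ in (0:ℝ)..Real.pi, Real.cos φ / Real.sqrt (1 - (x - δ * Real.cos φ)^2) with hUdef
  refine ⟨trig_rep δ α hδ0 hα1 hα2, ?_⟩
  -- derivatives of U and V
  have hU : HasDerivAt U (∫ φ in (0:ℝ)..Real.pi, Real.cos φ * ((α - δ * Real.cos φ) /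
      ((1 - (α - δ * Real.cos φ)^2) * Real.sqrt (1 - (α - δ * Real.cos φ)^2)))) α :=
    hasDerivAt_param δ α hδ0 hα1 hα2 Real.cos Real.continuous_cos
      (fun φ => Real.abs_cos_le_one φ)
  have hVd : HasDerivAt V (∫ φ in (0:ℝ)..Real.pi, (α - δ * Real.cos φ) /
      ((1 - (α - δ * Real.cos φ)^2) * Real.sqrt (1 - (α - δ * Real.cos φ)^2))) α := by
    have h := hasDerivAt_param δ α hδ0 hα1 hα2 (fun _ => 1) continuous_const (by norm_num)
    rw [hVdef]
    simpa [one_div] using h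
  set I2 : ℝ := ∫ φ in (0:ℝ)..Real.pi, (α - δ * Real.cos φ) /
      ((1 - (α - δ * Real.cos φ)^2) * Real.sqrt (1 - (α - δ * Real.cos φ)^2)) with hI2def
  set u' : ℝ := ∫ φ in (0:ℝ)..Real.pi, Real.cos φ * ((α - δ * Real.cos φ) /
      ((1 - (α - δ * Real.cos φ)^2) * Real.sqrt (1 - (α - δ * Real.cos φ)^2))) with hu'def
  have hVne : V α ≠ 0 := hV0.ne'
  have hD : HasDerivAt (fun x => x - δ * U x / V x)
      (1 - (δ * u' * V α - δ * U α * (∫ φ in (0:ℝ)..Real.pi, (α - δ * Real.cos φ) /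
      ((1 - (α - δ * Real.cos φ)^2) * Real.sqrt (1 - (α - δ * Real.cos φ)^2)))) / (V α)^2) α := by
    have := (hasDerivAt_id α).sub (((hU.const_mul δ).div hVd hVne))
    exact this
  have hEq : (fun x => x - δ * U x / V x) =ᶠ[𝓝 α] cpt δ := by
    filter_upwards [isOpen_Ioo.mem_nhds (⟨hα1, hα2⟩ : α ∈ Ioo (δ - 1) (1 - δ))] with x hx
    exact (trig_rep δ x hδ0 hx.1 hx.2).symm
  have hcpt : HasDerivAt (cpt δ) (1 - (δ * u' * V α - δ * U α * I2) / (V α)^2) α :=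
    hD.congr_of_eventuallyEq hEq.symm
  refine ⟨hcpt.differentiableAt, ?_⟩
  rw [hcpt.deriv]
  -- integral identities
  have hintI2d : IntervalIntegrable (fun φ => (α - δ * Real.cos φ) /
      ((1 - (α - δ * Real.cos φ)^2) * Real.sqrt (1 - (α - δ * Real.cos φ)^2)))
      volume 0 Real.pi := by
    apply Continuous.intervalIntegrable
    apply Continuous.div (continuous_const.sub (continuous_const.mul Real.continuous_cos))
      (hcont.mul hconts)
    intro φ
    exact (mul_pos (hxi φ) (Real.sqrt_pos.mpr (hxi φ))).ne'
  have hintu'd : IntervalIntegrable (fun φ => Real.cos φ * ((α - δ * Real.cos φ) /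
      ((1 - (α - δ * Real.cos φ)^2) * Real.sqrt (1 - (α - δ * Real.cos φ)^2))))
      volume 0 Real.pi := by
    apply Continuous.intervalIntegrable
    apply Real.continuous_cos.mul
    apply Continuous.div (continuous_const.sub (continuous_const.mul Real.continuous_cos))
      (hcont.mul hconts)
    intro φ
    exact (mul_pos (hxi φ) (Real.sqrt_pos.mpr (hxi φ))).ne'
  have hI1 : (∫ φ in (0:ℝ)..Real.pi, (α - δ * Real.cos φ) /
        ((1 - (α - δ * Real.cos φ)) * Real.sqrt (1 - (α - δ * Real.cos φ)^2)))
      = (1 + α) * I2 - δ * u' := by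
    rw [hI2def, hu'def, ← intervalIntegral.integral_const_mul,
      ← intervalIntegral.integral_const_mul,
      ← intervalIntegral.integral_sub (hintI2d.const_mul _) (hintu'd.const_mul _)]
    apply intervalIntegral.integral_congr
    intro φ _
    dsimp only
    obtain ⟨hb1, hb2⟩ := hxiB φ
    have hsne := hs0 φ
    set s := Real.sqrt (1 - (α - δ * Real.cos φ)^2) with hsdef
    have h1 : (1:ℝ) - (α - δ * Real.cos φ) ≠ 0 := by nlinarith
    have h2 : (1:ℝ) + (α - δ * Real.cos φ) ≠ 0 := by nlinarith
    have h3 : (1:ℝ) - (α - δ * Real.cos φ)^2 ≠ 0 := (hxi φ).ne'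
    field_simp
    ring
  have hI3 : (∫ φ in (0:ℝ)..Real.pi,
        Real.sqrt ((1 + (α - δ * Real.cos φ)) / (1 - (α - δ * Real.cos φ))))
      = (1 + α) * V α - δ * U α := by
    rw [hVdef, hUdef]
    simp only []
    rw [← intervalIntegral.integral_const_mul, ← intervalIntegral.integral_const_mul,
      ← intervalIntegral.integral_sub (hintV.const_mul _) (hintU.const_mul _)]
    apply intervalIntegral.integral_congr
    intro φ _
    dsimp only
    obtain ⟨hb1, hb2⟩ := hxiB φ
    have h1 : (0:ℝ) < 1 - (α - δ * Real.cos φ) := by nlinarith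
    have h2 : (0:ℝ) ≤ 1 + (α - δ * Real.cos φ) := by nlinarith
    have hrw : (1 + (α - δ * Real.cos φ)) / (1 - (α - δ * Real.cos φ))
        = (1 + (α - δ * Real.cos φ))^2 / (1 - (α - δ * Real.cos φ)^2) := by
      rw [show 1 - (α - δ * Real.cos φ)^2
        = (1 - (α - δ * Real.cos φ)) * (1 + (α - δ * Real.cos φ)) by ring]
      rcases eq_or_lt_of_le h2 with h | h
      · rw [← h]; simp
      · field_simp
    rw [hrw, Real.sqrt_div (by positivity : (0:ℝ) ≤ (1 + (α - δ * Real.cos φ))^2),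
      Real.sqrt_sq h2]
    ring
  rw [hI1, hI3]
  field_simp
  ring
end
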